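/- arXiv:1207.2721 — 4 statements merged into one kernel-verified Lean document; each statement's English description precedes it below -/
import Mathlib

section
/- Let N ≥ 1, let D ⊆ ℂ^N be a bounded convex domain, let G : D × [0,∞) → ℂ^N be a Herglotz vector field of order d ∈ [1,∞] on D, and let (f_t : D → ℂ^N)_{t≥0} be a solution of the Loewner PDE for G. Then the family (f_t) is of order d: for every compact K ⊆ D and every T > 0 there exists c ∈ L^d([0,T],ℝ≥0) such that ‖f_s(z) − f_t(z)‖ ≤ ∫_s^t c(ξ)dξ for all z ∈ K and 0 ≤ s ≤ t ≤ T. -/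
open MeasureTheory Set Metric Filter
open scoped ENNReal

noncomputable section

/-- `ℂ^N` with the Euclidean norm. -/
abbrev ℂN (N : ℕ) := EuclideanSpace ℂ (Fin N)

variable {N : ℕ}

/-- A domain: a nonempty open connected set. -/
def IsDomainSet (D : Set (ℂN N)) : Prop := IsOpen D ∧ IsConnected D

/-- A holomorphic vector field `H` on `D` is semicomplete if every Cauchy problem
`x'(s) = H(x(s))`, `x(0) = z₀` with `z₀ ∈ D` has a solution defined on all of `[0,∞)`
with values in `D`. -/
def Semicomplete (H : ℂN N → ℂN N) (D : Set (ℂN N)) : Prop :=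
  ∀ z₀ ∈ D, ∃ x : ℝ → ℂN N, x 0 = z₀ ∧ (∀ s : ℝ, 0 ≤ s → x s ∈ D) ∧
    ∀ s : ℝ, 0 ≤ s → HasDerivAt x (H (x s)) s

/-- A Herglotz vector field of order `d` on a domain `D ⊆ ℂ^N`. -/
structure IsHerglotzVectorField (G : ℂN N → ℝ → ℂN N) (D : Set (ℂN N)) (d : ℝ≥0∞) :
    Prop where
  measurable_t : ∀ z ∈ D, StronglyMeasurable fun t : ℝ => G z t
  holomorphic : ∀ t : ℝ, 0 ≤ t → DifferentiableOn ℂ (fun z => G z t) D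
  lp_bound : ∀ K : Set (ℂN N), K ⊆ D → IsCompact K → ∀ T : ℝ, 0 < T →
    ∃ C : ℝ → ℝ, (∀ t, 0 ≤ C t) ∧ MemLp C d (volume.restrict (Icc (0:ℝ) T)) ∧
      ∀ᵐ t ∂(volume.restrict (Icc (0:ℝ) T)), ∀ z ∈ K, ‖G z t‖ ≤ C t
  semicomplete : ∀ᵐ t ∂(volume.restrict (Ici (0:ℝ))), Semicomplete (fun z => G z t) D

/-- `t ↦ f t` is absolutely continuous on `[0,T]`. -/
def AbsContOnIcc (f : ℝ → ℂN N) (T : ℝ) : Prop :=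
  ∀ ε : ℝ, 0 < ε → ∃ δ : ℝ, 0 < δ ∧ ∀ n : ℕ, ∀ a b : Fin n → ℝ,
    (∀ i, a i ∈ Icc (0:ℝ) T) → (∀ i, b i ∈ Icc (0:ℝ) T) → (∀ i, a i ≤ b i) →
    (∀ i j, i ≠ j → Disjoint (Ioo (a i) (b i)) (Ioo (a j) (b j))) →
    (∑ i, (b i - a i)) < δ → (∑ i, ‖f (b i) - f (a i)‖) < ε

/-- A solution `(f_t)_{t ≥ 0}` of the Loewner PDE `∂f_t(z)/∂t = -df_t(z)·G(z,t)` on `D`. -/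
structure IsLoewnerSolution (f : ℝ → ℂN N → ℂN N) (G : ℂN N → ℝ → ℂN N)
    (D : Set (ℂN N)) : Prop where
  holomorphic : ∀ t : ℝ, 0 ≤ t → DifferentiableOn ℂ (f t) D
  continuous_t : ∀ K : Set (ℂN N), K ⊆ D → IsCompact K → ∀ t₀ : ℝ, 0 ≤ t₀ →
    ∀ ε : ℝ, 0 < ε → ∃ δ : ℝ, 0 < δ ∧ ∀ t : ℝ, 0 ≤ t → |t - t₀| < δ →
      ∀ z ∈ K, ‖f t z - f t₀ z‖ < ε
  locAbsCont : ∀ z ∈ D, ∀ T : ℝ, 0 < T → AbsContOnIcc (fun t => f t z) T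
  pde : ∀ z ∈ D, ∀ᵐ t ∂(volume.restrict (Ici (0:ℝ))),
    HasDerivAt (fun s : ℝ => f s z) (-(fderiv ℂ (f t) z (G z t))) t

/-- An evolution family of order `d` on `D`. -/
structure IsEvolutionFamily (φ : ℝ → ℝ → ℂN N → ℂN N) (D : Set (ℂN N)) (d : ℝ≥0∞) :
    Prop where
  mapsTo : ∀ s t : ℝ, 0 ≤ s → s ≤ t → MapsTo (φ s t) D D
  holomorphic : ∀ s t : ℝ, 0 ≤ s → s ≤ t → DifferentiableOn ℂ (φ s t) D
  id_eq : ∀ s : ℝ, 0 ≤ s → ∀ z ∈ D, φ s s z = z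
  comp : ∀ s u t : ℝ, 0 ≤ s → s ≤ u → u ≤ t → ∀ z ∈ D, φ s t z = φ u t (φ s u z)
  lp_bound : ∀ T : ℝ, 0 < T → ∀ K : Set (ℂN N), K ⊆ D → IsCompact K →
    ∃ c : ℝ → ℝ, (∀ ξ, 0 ≤ c ξ) ∧ MemLp c d (volume.restrict (Icc (0:ℝ) T)) ∧
      ∀ z ∈ K, ∀ s u t : ℝ, 0 ≤ s → s ≤ u → u ≤ t → t ≤ T →
        ‖φ s t z - φ s u z‖ ≤ ∫ ξ in u..t, c ξ

/-- The family `(φ_{s,t})` solves the Loewner ODE `∂φ_{s,t}(z)/∂t = G(φ_{s,t}(z),t)`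
for all `z ∈ D`, all `s ≥ 0` and a.e. `t ∈ [s,∞)`. -/
def SolvesLoewnerODE (φ : ℝ → ℝ → ℂN N → ℂN N) (G : ℂN N → ℝ → ℂN N)
    (D : Set (ℂN N)) : Prop :=
  ∀ z ∈ D, ∀ s : ℝ, 0 ≤ s → ∀ᵐ t ∂(volume.restrict (Ici s)),
    HasDerivAt (fun r : ℝ => φ s r z) (G (φ s t z) t) t

/-- The family `(f_t)` is of order `d` on `D`. -/
def IsOrderD (f : ℝ → ℂN N → ℂN N) (D : Set (ℂN N)) (d : ℝ≥0∞) : Prop :=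
  ∀ K : Set (ℂN N), K ⊆ D → IsCompact K → ∀ T : ℝ, 0 < T →
    ∃ c : ℝ → ℝ, (∀ ξ, 0 ≤ c ξ) ∧ MemLp c d (volume.restrict (Icc (0:ℝ) T)) ∧
      ∀ z ∈ K, ∀ s t : ℝ, 0 ≤ s → s ≤ t → t ≤ T →
        ‖f s z - f t z‖ ≤ ∫ ξ in s..t, c ξ

/-- `(U, V)` is a Runge pair: every function holomorphic on `U` is approximable, uniformly on
compact subsets of `U`, by functions holomorphic on `V`. -/
def IsRungePair (U V : Set (ℂN N)) : Prop :=
  ∀ f : ℂN N → ℂ, DifferentiableOn ℂ f U →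
    ∀ K : Set (ℂN N), K ⊆ U → IsCompact K → ∀ ε : ℝ, 0 < ε →
      ∃ g : ℂN N → ℂ, DifferentiableOn ℂ g V ∧ ∀ z ∈ K, ‖f z - g z‖ < ε

/-- A Runge domain of `ℂ^N`. -/
def IsRungeDomain (U : Set (ℂN N)) : Prop := IsRungePair U univ

/-- A holomorphic automorphism of `ℂ^N`. -/
def IsHolomorphicAutomorphism (α : ℂN N → ℂN N) : Prop :=
  Differentiable ℂ α ∧ ∃ β : ℂN N → ℂN N, Differentiable ℂ β ∧
    Function.LeftInverse β α ∧ Function.RightInverse β α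

/-- A starlike domain: a domain which is star-shaped with respect to one of its points. -/
def IsStarlikeDomain (U : Set (ℂN N)) : Prop :=
  IsDomainSet U ∧ ∃ p ∈ U, ∀ z ∈ U, ∀ t : ℝ, t ∈ Icc (0:ℝ) 1 → p + t • (z - p) ∈ U

/-- A starshapelike domain: the image of `U` under some holomorphic automorphism of `ℂ^N`
is starlike. -/
def IsStarshapelike (U : Set (ℂN N)) : Prop :=
  IsDomainSet U ∧ ∃ α : ℂN N → ℂN N, IsHolomorphicAutomorphism α ∧
    IsStarlikeDomain (α '' U)


open scoped Topology Interval


/-- Lebesgue differentiation: a.e. point is a Lebesgue point. -/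
lemma aux_lebesgue_pts (c : ℝ → ℝ) (hc : Integrable c) :
    ∀ᵐ x ∂(volume : Measure ℝ), Tendsto
      (fun h : ℝ => ⨍ y in closedBall x h, ‖c y - c x‖) (𝓝[>] (0:ℝ)) (𝓝 0) := by
  filter_upwards [IsUnifLocDoublingMeasure.ae_tendsto_average_norm_sub
    (μ := (volume : Measure ℝ)) hc.locallyIntegrable 1] with x hx
  refine hx (fun _ => x) id tendsto_id ?_
  filter_upwards [self_mem_nhdsWithin] with h hh
  have h0 : (0:ℝ) < h := hh
  exact mem_closedBall_self (by simpa using h0.le)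

/-- Cauchy-type estimate via the Schwarz lemma. -/
lemma aux_fderiv_norm_le {g : ℂN N → ℂN N} {Dom : Set (ℂN N)} (hDom : IsOpen Dom)
    (hg : DifferentiableOn ℂ g Dom) {z : ℂN N} {r M : ℝ} (hr : 0 < r)
    (hball : Metric.ball z r ⊆ Dom) (hM : ∀ w ∈ Metric.ball z r, ‖g w‖ ≤ M) :
    ‖fderiv ℂ g z‖ ≤ (2*M+1)/r := by
  have hM0 : 0 ≤ M := le_trans (norm_nonneg _) (hM z (mem_ball_self hr))
  refine ContinuousLinearMap.opNorm_le_bound _ (by positivity) ?_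
  intro v
  rcases eq_or_ne v 0 with rfl | hv
  · simp
  have hv0 : 0 < ‖v‖ := norm_pos_iff.mpr hv
  set ρ := r / ‖v‖ with hρ
  have hρ0 : 0 < ρ := div_pos hr hv0
  set φ : ℂ → ℂN N := fun w => z + w • v with hφdef
  have hφ0 : φ 0 = z := by simp [φ]
  have hφmem : ∀ w ∈ Metric.ball (0:ℂ) ρ, φ w ∈ Metric.ball z r := by
    intro w hw
    rw [mem_ball, dist_eq_norm] at hw ⊢
    have : ‖φ w - z‖ = ‖w‖ * ‖v‖ := by
      simp [φ, add_sub_cancel_left, norm_smul]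
    rw [this]
    have hwn : ‖w‖ < ρ := by simpa using hw
    calc ‖w‖ * ‖v‖ < ρ * ‖v‖ := by exact mul_lt_mul_of_pos_right hwn hv0
      _ = r := by rw [hρ, div_mul_cancel₀ _ hv0.ne']
  have hφd : ∀ w : ℂ, HasDerivAt φ v w := by
    intro w
    simpa [φ] using ((hasDerivAt_id w).smul_const v).const_add z
  set u : ℂ → ℂN N := fun w => g (φ w) with hu
  have hgz : DifferentiableAt ℂ g z :=
    hg.differentiableAt (hDom.mem_nhds (hball (mem_ball_self hr)))
  have hu0 : HasDerivAt u (fderiv ℂ g z v) 0 := by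
    have hF : HasFDerivAt g (fderiv ℂ g z) (φ 0) := by rw [hφ0]; exact hgz.hasFDerivAt
    exact hF.comp_hasDerivAt 0 (hφd 0)
  have hud : DifferentiableOn ℂ u (Metric.ball (0:ℂ) ρ) := by
    intro w hw
    have h1 : DifferentiableAt ℂ g (φ w) :=
      hg.differentiableAt (hDom.mem_nhds (hball (hφmem w hw)))
    exact (h1.comp w (hφd w).differentiableAt).differentiableWithinAt
  have hmaps : MapsTo u (Metric.ball (0:ℂ) ρ) (Metric.ball (u 0) (2*M+1)) := by
    intro w hw
    have h1 : ‖g (φ w)‖ ≤ M := hM _ (hφmem w hw)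
    have h2 : ‖g (φ 0)‖ ≤ M := hM _ (by rw [hφ0]; exact mem_ball_self hr)
    rw [mem_ball, dist_eq_norm]
    calc ‖u w - u 0‖ ≤ ‖u w‖ + ‖u 0‖ := norm_sub_le _ _
      _ ≤ M + M := add_le_add h1 h2
      _ < 2*M+1 := by linarith
  have hder := Complex.norm_deriv_le_div_of_mapsTo_ball hud (hmaps.mono_right ball_subset_closedBall) hρ0
  rw [hu0.deriv] at hder
  calc ‖fderiv ℂ g z v‖ ≤ (2*M+1)/ρ := hder
    _ = (2*M+1)/r * ‖v‖ := by rw [hρ, div_div_eq_mul_div, mul_div_right_comm]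

/-- FTC for absolutely continuous functions with integrable a.e. derivative bound. -/
lemma aux_ac_ftc {g : ℝ → ℂN N} {v : ℝ → ℂN N} {c : ℝ → ℝ} {T s t : ℝ}
    (hT : 0 < T) (hs : 0 ≤ s) (hst : s ≤ t) (htT : t ≤ T)
    (hac : AbsContOnIcc g T)
    (hcint : Integrable c) (hc0 : ∀ ξ, 0 ≤ c ξ)
    (hder : ∀ᵐ ξ ∂(volume.restrict (Icc s t)), HasDerivAt g (v ξ) ξ ∧ ‖v ξ‖ ≤ c ξ) :
    ‖g t - g s‖ ≤ ∫ ξ in s..t, c ξ := by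
  classical
  rcases eq_or_lt_of_le hst with rfl | hslt
  · simp
  -- it suffices to prove the bound up to an arbitrary `ε' > 0`
  refine le_of_forall_pos_le_add ?_
  intro ε' hε'
  set ε : ℝ := ε' / (3*(t-s) + 2) with hεdef
  have hεpos : 0 < ε := by
    apply div_pos hε'; nlinarith
  -- absolute continuity data
  obtain ⟨δ, hδpos, hδ⟩ := hac ε hεpos
  -- the good-point predicate
  set P : ℝ → Prop := fun x => (HasDerivAt g (v x) x ∧ ‖v x‖ ≤ c x) ∧
    Tendsto (fun h : ℝ => ⨍ y in closedBall x h, ‖c y - c x‖) (𝓝[>] (0:ℝ)) (𝓝 0) with hPdef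
  have haeP : ∀ᵐ ξ ∂(volume.restrict (Icc s t)), P ξ :=
    hder.and (ae_restrict_of_ae (aux_lebesgue_pts c hcint))
  have hZ : volume ({x | ¬ P x} ∩ Icc s t) = 0 := by
    rw [← Measure.restrict_apply' measurableSet_Icc]
    exact haeP
  obtain ⟨U, hUsup, hUopen, hUvol⟩ := Set.exists_isOpen_lt_of_lt _ (ENNReal.ofReal δ)
    (by rw [hZ]; exact ENNReal.ofReal_pos.mpr hδpos)
  -- the family predicate
  set Fam : ℝ → ∀ n : ℕ, (Fin n → ℝ) → (Fin n → ℝ) → Prop := fun x n a b =>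
    (∀ i, s ≤ a i) ∧ (∀ i, a i ≤ b i) ∧ (∀ i, b i ≤ x) ∧
    (∀ i, Ioo (a i) (b i) ⊆ U) ∧
    (∀ i j, i ≠ j → Disjoint (Ioo (a i) (b i)) (Ioo (a j) (b j))) with hFamdef
  set S : Set ℝ := {x | x ∈ Icc s t ∧ ∃ n a b, Fam x n a b ∧
    ‖g x - g s‖ ≤ (∫ ξ in s..x, c ξ) + 3*ε*(x-s) + ∑ i, ‖g (b i) - g (a i)‖} with hSdef
  -- the budget estimate
  have hbudget : ∀ x, x ≤ t → ∀ n (a b : Fin n → ℝ), Fam x n a b →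
      (∑ i, ‖g (b i) - g (a i)‖) < ε := by
    intro x hxt n a b ⟨h1, h2, h3, h4, h5⟩
    have hlen : (∑ i, (b i - a i)) < δ := by
      have hm : ENNReal.ofReal (∑ i, (b i - a i)) = volume (⋃ i, Ioo (a i) (b i)) := by
        rw [measure_iUnion (fun i j hij => h5 i j hij) (fun i => measurableSet_Ioo),
          tsum_fintype]
        rw [ENNReal.ofReal_sum_of_nonneg (fun i _ => sub_nonneg.mpr (h2 i))]
        simp [Real.volume_Ioo]
      have hle : volume (⋃ i, Ioo (a i) (b i)) ≤ volume U :=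
        measure_mono (iUnion_subset h4)
      have : ENNReal.ofReal (∑ i, (b i - a i)) < ENNReal.ofReal δ :=
        lt_of_le_of_lt (hm ▸ hle) hUvol
      exact (ENNReal.ofReal_lt_ofReal_iff_of_nonneg
        (Finset.sum_nonneg fun i _ => sub_nonneg.mpr (h2 i))).mp this
    exact hδ n a b (fun i => ⟨hs.trans (h1 i), ((h2 i).trans ((h3 i).trans hxt)).trans htT⟩)
      (fun i => ⟨hs.trans ((h1 i).trans (h2 i)), ((h3 i).trans hxt).trans htT⟩) h2 h5 hlen
  -- basic facts about S
  have hsS : s ∈ S := by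
    refine ⟨⟨le_rfl, hst⟩, 0, (fun i => i.elim0), (fun i => i.elim0), ?_, by simp⟩
    exact ⟨fun i => i.elim0, fun i => i.elim0, fun i => i.elim0, fun i => i.elim0,
      fun i => i.elim0⟩
  have hbdd : BddAbove S := ⟨t, fun x hx => hx.1.2⟩
  set x₁ : ℝ := sSup S with hx₁def
  have hx₁mem : x₁ ∈ Icc s t := ⟨le_csSup hbdd hsS, csSup_le ⟨s, hsS⟩ fun x hx => hx.1.2⟩
  -- interval integrability
  have hii : ∀ a b : ℝ, IntervalIntegrable c volume a b := fun a b => hcint.intervalIntegrable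
  -- extension lemma: from a point of S we can move right through U
  have hext : ∀ x, x ∈ S → ∀ y, x ≤ y → y ≤ t → Ioo x y ⊆ U → y ∈ S := by
    rintro x ⟨hxI, n, a, b, ⟨f1, f2, f3, f4, f5⟩, hxb⟩ y hxy hyt hIoo
    rcases eq_or_lt_of_le hxy with rfl | hxy'
    · exact ⟨hxI, n, a, b, ⟨f1, f2, f3, f4, f5⟩, hxb⟩
    refine ⟨⟨hxI.1.trans hxy, hyt⟩, n+1, Fin.snoc a x, Fin.snoc b y, ?_, ?_⟩
    · refine ⟨?_, ?_, ?_, ?_, ?_⟩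
      · intro i
        rcases Fin.eq_castSucc_or_eq_last i with ⟨j, rfl⟩ | rfl
        · simpa using f1 j
        · simpa using hxI.1
      · intro i
        rcases Fin.eq_castSucc_or_eq_last i with ⟨j, rfl⟩ | rfl
        · simpa using f2 j
        · simpa using hxy
      · intro i
        rcases Fin.eq_castSucc_or_eq_last i with ⟨j, rfl⟩ | rfl
        · simpa using (f3 j).trans hxy
        · simp
      · intro i
        rcases Fin.eq_castSucc_or_eq_last i with ⟨j, rfl⟩ | rfl
        · simpa using f4 j
        · simpa using hIoo
      · intro i j hij
        rcases Fin.eq_castSucc_or_eq_last i with ⟨i', rfl⟩ | rfl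
        · rcases Fin.eq_castSucc_or_eq_last j with ⟨j', rfl⟩ | rfl
          · simp only [Fin.snoc_castSucc]
            exact f5 i' j' (fun h => hij (by rw [h]))
          · simp only [Fin.snoc_castSucc, Fin.snoc_last]
            refine Set.disjoint_left.mpr ?_
            rintro ξ hξ1 hξ2
            exact absurd (hξ1.2.trans_le (f3 i')) (not_lt.mpr hξ2.1.le)
        · rcases Fin.eq_castSucc_or_eq_last j with ⟨j', rfl⟩ | rfl
          · simp only [Fin.snoc_castSucc, Fin.snoc_last]
            refine Set.disjoint_left.mpr ?_
            rintro ξ hξ1 hξ2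
            exact absurd (hξ2.2.trans_le (f3 j')) (not_lt.mpr hξ1.1.le)
          · exact absurd rfl hij
    · have hsum : (∑ i : Fin (n+1), ‖g ((Fin.snoc b y : Fin (n+1) → ℝ) i)
            - g ((Fin.snoc a x : Fin (n+1) → ℝ) i)‖)
          = (∑ i : Fin n, ‖g (b i) - g (a i)‖) + ‖g y - g x‖ := by
        rw [Fin.sum_univ_castSucc]
        simp [Fin.snoc_castSucc, Fin.snoc_last]
      rw [hsum]
      have hsplit : (∫ ξ in s..y, c ξ) = (∫ ξ in s..x, c ξ) + ∫ ξ in x..y, c ξ :=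
        (intervalIntegral.integral_add_adjacent_intervals (hii s x) (hii x y)).symm
      have hnn : 0 ≤ ∫ ξ in x..y, c ξ :=
        intervalIntegral.integral_nonneg hxy (fun ξ _ => hc0 ξ)
      calc ‖g y - g s‖ ≤ ‖g y - g x‖ + ‖g x - g s‖ := norm_sub_le_norm_sub_add_norm_sub _ _ _
        _ ≤ ‖g y - g x‖ + ((∫ ξ in s..x, c ξ) + 3*ε*(x-s) + ∑ i, ‖g (b i) - g (a i)‖) := by
            linarith
        _ ≤ (∫ ξ in s..y, c ξ) + 3*ε*(y-s) +
            ((∑ i : Fin n, ‖g (b i) - g (a i)‖) + ‖g y - g x‖) := by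
            rw [hsplit]; nlinarith [hεpos.le]
  -- the good-point estimate
  have hgood : ∀ x₀ ∈ Icc s t, x₀ ∉ U → ∃ rs, 0 < rs ∧ ∀ y ∈ Icc s t, |y - x₀| ≤ rs →
      ‖g y - g x₀‖ ≤ (∫ ξ in Ι x₀ y, c ξ) + 3*ε*|y - x₀| := by
    intro x₀ hx₀I hx₀U
    have hP : P x₀ := by
      by_contra h
      exact hx₀U (hUsup ⟨h, hx₀I⟩)
    obtain ⟨⟨hder₀, hvc₀⟩, hleb₀⟩ := hP
    have h1 : ∀ᶠ y in 𝓝 x₀, ‖g y - g x₀ - (y - x₀) • v x₀‖ ≤ ε * ‖y - x₀‖ :=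
      (hasDerivAt_iff_isLittleO.mp hder₀).def hεpos
    obtain ⟨r₁, hr₁, h1'⟩ := Metric.eventually_nhds_iff.mp h1
    have h2 : ∀ᶠ h in 𝓝[>] (0:ℝ), (⨍ y in closedBall x₀ h, ‖c y - c x₀‖) < ε/2 :=
      hleb₀.eventually_lt_const (by positivity)
    obtain ⟨r₂, hr₂, h2'⟩ := mem_nhdsGT_iff_exists_Ioc_subset.mp h2
    refine ⟨min (r₁/2) r₂, lt_min (by linarith) hr₂, ?_⟩
    intro y hyI hyr
    rcases eq_or_ne y x₀ with rfl | hne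
    · simp
    set h : ℝ := |y - x₀| with hhdef
    have hhpos : 0 < h := abs_pos.mpr (sub_ne_zero.mpr hne)
    have hΙsub : Ι x₀ y ⊆ closedBall x₀ h := by
      intro ξ hξ
      rcases le_total x₀ y with hc' | hc'
      · rw [uIoc_of_le hc'] at hξ
        rw [mem_closedBall, Real.dist_eq, abs_sub_le_iff]
        constructor
        · calc ξ - x₀ ≤ y - x₀ := by linarith [hξ.2]
            _ ≤ h := le_abs_self _
        · linarith [hξ.1, hhpos.le]
      · rw [uIoc_of_ge hc'] at hξ
        rw [mem_closedBall, Real.dist_eq, abs_sub_le_iff]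
        constructor
        · linarith [hξ.2, hhpos.le]
        · calc x₀ - ξ ≤ x₀ - y := by linarith [hξ.1]
            _ ≤ h := by rw [hhdef, abs_sub_comm]; exact le_abs_self _
    have hvolΙ : volume (Ι x₀ y) = ENNReal.ofReal h := by
      rcases le_total x₀ y with hc' | hc'
      · rw [uIoc_of_le hc', Real.volume_Ioc, hhdef, abs_of_nonneg (by linarith)]
      · rw [uIoc_of_ge hc', Real.volume_Ioc, hhdef, abs_of_nonpos (by linarith), neg_sub]
    -- derivative estimate
    have hdy : ‖g y - g x₀‖ ≤ ε*h + h * c x₀ := by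
      have := h1' (y := y) (by rw [Real.dist_eq]; calc |y - x₀| ≤ min (r₁/2) r₂ := hyr
        _ ≤ r₁/2 := min_le_left _ _
        _ < r₁ := by linarith)
      have hnv : ‖(y - x₀) • v x₀‖ ≤ h * c x₀ := by
        rw [norm_smul, Real.norm_eq_abs]
        exact mul_le_mul_of_nonneg_left hvc₀ (abs_nonneg _)
      calc ‖g y - g x₀‖ ≤ ‖g y - g x₀ - (y - x₀) • v x₀‖ + ‖(y - x₀) • v x₀‖ := by
            have := norm_add_le (g y - g x₀ - (y - x₀) • v x₀) ((y - x₀) • v x₀)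
            simpa using this
        _ ≤ ε * ‖y - x₀‖ + (h * c x₀) := add_le_add this hnv
        _ = ε*h + h * c x₀ := by rw [Real.norm_eq_abs]
    -- integral lower bound
    have hIcb : IntegrableOn (fun ξ => ‖c ξ - c x₀‖) (closedBall x₀ h) :=
      ((hcint.integrableOn).sub
        ((integrableOn_const_iff).mpr (Or.inr measure_closedBall_lt_top))).norm
    have havg : (⨍ ξ in closedBall x₀ h, ‖c ξ - c x₀‖) < ε/2 :=
      h2' ⟨hhpos, hyr.trans (min_le_right _ _)⟩
    have hcb : (∫ ξ in closedBall x₀ h, ‖c ξ - c x₀‖) ≤ ε * h := by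
      have hvol : (volume (closedBall x₀ h)).toReal = 2*h := by
        rw [Real.volume_closedBall]; exact ENNReal.toReal_ofReal (by positivity)
      have heq := setAverage_eq (μ := volume) (fun ξ => ‖c ξ - c x₀‖) (closedBall x₀ h)
      rw [smul_eq_mul, measureReal_def, hvol] at heq
      have h2h : (0:ℝ) < 2*h := by positivity
      have : (∫ ξ in closedBall x₀ h, ‖c ξ - c x₀‖) = (2*h) * ⨍ ξ in closedBall x₀ h, ‖c ξ - c x₀‖ := by
        rw [heq]; field_simp
      rw [this]
      nlinarith [havg]
    have hsubint : (∫ ξ in Ι x₀ y, ‖c ξ - c x₀‖) ≤ ∫ ξ in closedBall x₀ h, ‖c ξ - c x₀‖ :=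
      setIntegral_mono_set hIcb (Eventually.of_forall fun ξ => norm_nonneg _)
        (HasSubset.Subset.eventuallyLE hΙsub)
    have hconst : (∫ _ξ in Ι x₀ y, c x₀) = h * c x₀ := by
      rw [setIntegral_const, measureReal_def, hvolΙ, ENNReal.toReal_ofReal hhpos.le, smul_eq_mul]
    have hlow : h * c x₀ - ε * h ≤ ∫ ξ in Ι x₀ y, c ξ := by
      have hint1 : IntegrableOn (fun ξ => c ξ - c x₀) (Ι x₀ y) :=
        (hcint.integrableOn).sub ((integrableOn_const_iff).mpr
          (Or.inr (by rw [hvolΙ]; exact ENNReal.ofReal_lt_top)))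
      have hint2 : IntegrableOn (fun _ξ => c x₀) (Ι x₀ y) :=
        (integrableOn_const_iff).mpr (Or.inr (by rw [hvolΙ]; exact ENNReal.ofReal_lt_top))
      have hsplit : (∫ ξ in Ι x₀ y, c ξ)
          = (∫ _ξ in Ι x₀ y, c x₀) + ∫ ξ in Ι x₀ y, (c ξ - c x₀) := by
        rw [← integral_add hint2 hint1]
        simp
      have habs : |∫ ξ in Ι x₀ y, (c ξ - c x₀)| ≤ ∫ ξ in Ι x₀ y, ‖c ξ - c x₀‖ := by
        simpa [Real.norm_eq_abs] using norm_integral_le_integral_norm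
          (μ := volume.restrict (Ι x₀ y)) (f := fun ξ => c ξ - c x₀)
      have : -(ε*h) ≤ ∫ ξ in Ι x₀ y, (c ξ - c x₀) := by
        have := (abs_le.mp (habs.trans (hsubint.trans hcb))).1
        linarith [this]
      rw [hsplit, hconst]
      linarith
    linarith [hdy, hlow, mul_nonneg hεpos.le hhpos.le]
  -- main argument: x₁ ∈ S and x₁ = t
  have hmain : t ∈ S := by
    by_cases hU : x₁ ∈ U
    · obtain ⟨η, hη, hballU⟩ := Metric.isOpen_iff.mp hUopen x₁ hU
      rw [Real.ball_eq_Ioo] at hballU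
      obtain ⟨x, hxS, hxgt⟩ := exists_lt_of_lt_csSup ⟨s, hsS⟩ (by linarith : x₁ - η < x₁)
      have hxle : x ≤ x₁ := le_csSup hbdd hxS
      have hkey : ∀ y, x ≤ y → y ≤ t → y < x₁ + η → y ∈ S := by
        intro y h1 h2 h3
        refine hext x hxS y h1 h2 ?_
        intro ξ hξ
        exact hballU ⟨by linarith [hξ.1], by linarith [hξ.2]⟩
      have hx₁S : x₁ ∈ S := hkey x₁ hxle hx₁mem.2 (by linarith)
      rcases eq_or_lt_of_le hx₁mem.2 with heq | hlt
      · exact heq ▸ hx₁S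
      · exfalso
        set y : ℝ := min (x₁ + η/2) t with hydef
        have hy1 : x₁ < y := lt_min (by linarith) hlt
        have hyS : y ∈ S := hkey y (hxle.trans hy1.le) (min_le_right _ _)
          (lt_of_le_of_lt (min_le_left _ _) (by linarith))
        exact absurd (le_csSup hbdd hyS) (not_le.mpr hy1)
    · obtain ⟨rs, hrs, hkey⟩ := hgood x₁ hx₁mem hU
      obtain ⟨x, hxS, hxgt⟩ := exists_lt_of_lt_csSup ⟨s, hsS⟩ (by linarith : x₁ - rs < x₁)
      have hxle : x ≤ x₁ := le_csSup hbdd hxS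
      obtain ⟨hxI, n, a, b, hFam, hxb⟩ := hxS
      have hstep : ∀ x' y, x' ∈ Icc s t → y ∈ Icc s t → x' ≤ y → y - x' ≤ rs →
          ‖g y - g x'‖ ≤ (∫ ξ in x'..y, c ξ) + 3*ε*(y - x') → True := fun _ _ _ _ _ _ _ => trivial
      -- x₁ ∈ S with the same family
      have hgx : ‖g x₁ - g x‖ ≤ (∫ ξ in x..x₁, c ξ) + 3*ε*(x₁ - x) := by
        have := hkey x hxI (by rw [abs_sub_comm, abs_of_nonneg (by linarith)]; linarith)
        rw [norm_sub_rev] at this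
        rw [uIoc_comm, uIoc_of_le hxle, ← intervalIntegral.integral_of_le hxle] at this
        rwa [abs_sub_comm, abs_of_nonneg (by linarith)] at this
      have hx₁S : x₁ ∈ S := by
        refine ⟨hx₁mem, n, a, b, ⟨hFam.1, hFam.2.1, fun i => (hFam.2.2.1 i).trans hxle,
          hFam.2.2.2.1, hFam.2.2.2.2⟩, ?_⟩
        have hsplit : (∫ ξ in s..x₁, c ξ) = (∫ ξ in s..x, c ξ) + ∫ ξ in x..x₁, c ξ :=
          (intervalIntegral.integral_add_adjacent_intervals (hii s x) (hii x x₁)).symm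
        calc ‖g x₁ - g s‖ ≤ ‖g x₁ - g x‖ + ‖g x - g s‖ :=
              norm_sub_le_norm_sub_add_norm_sub _ _ _
          _ ≤ ((∫ ξ in x..x₁, c ξ) + 3*ε*(x₁ - x)) +
              ((∫ ξ in s..x, c ξ) + 3*ε*(x-s) + ∑ i, ‖g (b i) - g (a i)‖) :=
              add_le_add hgx hxb
          _ = (∫ ξ in s..x₁, c ξ) + 3*ε*(x₁-s) + ∑ i, ‖g (b i) - g (a i)‖ := by
              rw [hsplit]; ring
      rcases eq_or_lt_of_le hx₁mem.2 with heq | hlt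
      · exact heq ▸ hx₁S
      · exfalso
        set y : ℝ := min (x₁ + rs) t with hydef
        have hy1 : x₁ < y := lt_min (by linarith) hlt
        have hyI : y ∈ Icc s t := ⟨hx₁mem.1.trans hy1.le, min_le_right _ _⟩
        have hgy : ‖g y - g x₁‖ ≤ (∫ ξ in x₁..y, c ξ) + 3*ε*(y - x₁) := by
          have habs : |y - x₁| ≤ rs := by
            rw [abs_of_nonneg (by linarith)]
            have := min_le_left (x₁ + rs) t
            linarith
          have := hkey y hyI habs
          rw [uIoc_of_le hy1.le, ← intervalIntegral.integral_of_le hy1.le] at this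
          rwa [abs_of_nonneg (by linarith)] at this
        obtain ⟨_, n', a', b', hFam', hxb'⟩ := hx₁S
        have hyS : y ∈ S := by
          refine ⟨hyI, n', a', b', ⟨hFam'.1, hFam'.2.1, fun i => (hFam'.2.2.1 i).trans hy1.le,
            hFam'.2.2.2.1, hFam'.2.2.2.2⟩, ?_⟩
          have hsplit : (∫ ξ in s..y, c ξ) = (∫ ξ in s..x₁, c ξ) + ∫ ξ in x₁..y, c ξ :=
            (intervalIntegral.integral_add_adjacent_intervals (hii s x₁) (hii x₁ y)).symm
          calc ‖g y - g s‖ ≤ ‖g y - g x₁‖ + ‖g x₁ - g s‖ :=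
                norm_sub_le_norm_sub_add_norm_sub _ _ _
            _ ≤ ((∫ ξ in x₁..y, c ξ) + 3*ε*(y - x₁)) +
                ((∫ ξ in s..x₁, c ξ) + 3*ε*(x₁-s) + ∑ i, ‖g (b' i) - g (a' i)‖) :=
                add_le_add hgy hxb'
            _ = (∫ ξ in s..y, c ξ) + 3*ε*(y-s) + ∑ i, ‖g (b' i) - g (a' i)‖ := by
                rw [hsplit]; ring
        exact absurd (le_csSup hbdd hyS) (not_le.mpr hy1)
  -- conclude
  obtain ⟨_, n, a, b, hFam, htb⟩ := hmain
  have hsum := hbudget t le_rfl n a b hFam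
  calc ‖g t - g s‖ ≤ (∫ ξ in s..t, c ξ) + 3*ε*(t-s) + ∑ i, ‖g (b i) - g (a i)‖ := htb
    _ ≤ (∫ ξ in s..t, c ξ) + 3*ε*(t-s) + ε := by linarith
    _ ≤ (∫ ξ in s..t, c ξ) + ε' := by
        have hq : (0:ℝ) < 3*(t-s)+2 := by nlinarith
        have h1 : ε * (3*(t-s)+2) = ε' := by rw [hεdef]; field_simp
        nlinarith [hεpos.le]

/-- Uniform bound for the solution on a compact set times a compact time interval. -/
lemma aux_uniform_bound {f : ℝ → ℂN N → ℂN N} {G : ℂN N → ℝ → ℂN N} {D : Set (ℂN N)}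
    (hf : IsLoewnerSolution f G D) {K₂ : Set (ℂN N)} (hK₂D : K₂ ⊆ D) (hK₂ : IsCompact K₂)
    {T : ℝ} (hT : 0 < T) :
    ∃ M : ℝ, 0 ≤ M ∧ ∀ t ∈ Icc (0:ℝ) T, ∀ z ∈ K₂, ‖f t z‖ ≤ M := by
  classical
  have hsel : ∀ t₀ : ℝ, ∃ δ : ℝ, 0 < δ ∧ (t₀ ∈ Icc (0:ℝ) T →
      ∀ t : ℝ, 0 ≤ t → |t - t₀| < δ → ∀ z ∈ K₂, ‖f t z - f t₀ z‖ < 1) := by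
    intro t₀
    by_cases h : t₀ ∈ Icc (0:ℝ) T
    · obtain ⟨δ, hδ, hδ'⟩ := hf.continuous_t K₂ hK₂D hK₂ t₀ h.1 1 one_pos
      exact ⟨δ, hδ, fun _ => hδ'⟩
    · exact ⟨1, one_pos, fun hc => absurd hc h⟩
  choose δ hδpos hδ using hsel
  have hselB : ∀ t₀ : ℝ, ∃ B : ℝ, 0 ≤ B ∧ (t₀ ∈ Icc (0:ℝ) T → ∀ z ∈ K₂, ‖f t₀ z‖ ≤ B) := by
    intro t₀
    by_cases h : t₀ ∈ Icc (0:ℝ) T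
    · obtain ⟨B, hB⟩ := hK₂.exists_bound_of_continuousOn
        (((hf.holomorphic t₀ h.1).continuousOn).mono hK₂D)
      exact ⟨max B 0, le_max_right _ _, fun _ z hz => (hB z hz).trans (le_max_left _ _)⟩
    · exact ⟨0, le_rfl, fun hc => absurd hc h⟩
  choose B hB0 hB using hselB
  obtain ⟨F, hF⟩ := isCompact_Icc.elim_finite_subcover
    (fun p : Icc (0:ℝ) T => ball (p : ℝ) (δ p))
    (fun p => isOpen_ball)
    (fun x hx => mem_iUnion.mpr ⟨⟨x, hx⟩, mem_ball_self (hδpos x)⟩)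
  refine ⟨∑ p ∈ F, (B p + 1), Finset.sum_nonneg fun p _ => by linarith [hB0 (p:ℝ)], ?_⟩
  intro t ht z hz
  obtain ⟨p, hpF, hp⟩ : ∃ p ∈ F, t ∈ ball (p : ℝ) (δ p) := by
    have := hF ht
    simpa using this
  have h1 : ‖f t z - f (p:ℝ) z‖ < 1 :=
    hδ (p:ℝ) p.2 t ht.1 (by rw [← Real.dist_eq]; exact mem_ball.mp hp) z hz
  have h2 : ‖f (p:ℝ) z‖ ≤ B p := hB (p:ℝ) p.2 z hz
  have h3 : ‖f t z‖ ≤ B p + 1 := by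
    calc ‖f t z‖ ≤ ‖f t z - f (p:ℝ) z‖ + ‖f (p:ℝ) z‖ := by
          simpa using norm_add_le (f t z - f (p:ℝ) z) (f (p:ℝ) z)
      _ ≤ B p + 1 := by linarith
  calc ‖f t z‖ ≤ B p + 1 := h3
    _ ≤ ∑ q ∈ F, (B q + 1) :=
        Finset.single_le_sum (f := fun q : Icc (0:ℝ) T => B (q:ℝ) + 1)
          (fun q _ => by show (0:ℝ) ≤ B (q:ℝ) + 1; linarith [hB0 (q:ℝ)]) hpF

/-- Any solution of the Loewner PDE driven by a Herglotz vector field of order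
`d` is itself of order `d`. -/
theorem loewner_solution_is_order_d
    (N : ℕ) (hN : 1 ≤ N) (D : Set (ℂN N)) (hD : IsDomainSet D)
    (hDbdd : Bornology.IsBounded D) (hDconv : Convex ℝ D)
    (d : ℝ≥0∞) (hd : 1 ≤ d) (G : ℂN N → ℝ → ℂN N)
    (hG : IsHerglotzVectorField G D d)
    (f : ℝ → ℂN N → ℂN N) (hf : IsLoewnerSolution f G D) :
    IsOrderD f D d := by
  intro K hKD hK T hT
  obtain ⟨r, hr, hK₂D⟩ := hK.exists_cthickening_subset_open hD.1 hKD
  set K₂ : Set (ℂN N) := Metric.cthickening r K with hK₂def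
  have hK₂c : IsCompact K₂ := hK.cthickening
  obtain ⟨M, hM0, hMb⟩ := aux_uniform_bound hf hK₂D hK₂c hT
  obtain ⟨C, hC0, hCmem, hCb⟩ := hG.lp_bound K hKD hK T hT
  refine ⟨fun ξ => ((2*M+1)/r) * C ξ,
    fun ξ => mul_nonneg (by positivity) (hC0 ξ), hCmem.const_mul _, ?_⟩
  intro z hz s t hs hst htT
  have hzD : z ∈ D := hKD hz
  haveI : IsFiniteMeasure (volume.restrict (Icc (0:ℝ) T)) := by
    constructor
    rw [Measure.restrict_apply_univ]
    exact measure_Icc_lt_top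
  have hCint : IntegrableOn C (Icc (0:ℝ) T) := hCmem.integrable hd
  set cg : ℝ → ℝ := fun ξ => ((2*M+1)/r) * C ξ with hcgdef
  set c' : ℝ → ℝ := (Icc (0:ℝ) T).indicator cg with hc'def
  have hcgint : IntegrableOn cg (Icc (0:ℝ) T) := hCint.const_mul _
  have hc'int : Integrable c' := hcgint.integrable_indicator measurableSet_Icc
  have hc'0 : ∀ ξ, 0 ≤ c' ξ := fun ξ =>
    Set.indicator_nonneg (fun x _ => mul_nonneg (by positivity) (hC0 x)) ξ
  set v : ℝ → ℂN N := fun ξ => -(fderiv ℂ (f ξ) z (G z ξ)) with hvdef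
  have hae : ∀ᵐ ξ ∂(volume.restrict (Icc s t)),
      HasDerivAt (fun τ => f τ z) (v ξ) ξ ∧ ‖v ξ‖ ≤ c' ξ := by
    have h1 : ∀ᵐ ξ ∂(volume.restrict (Icc s t)), HasDerivAt (fun τ => f τ z) (v ξ) ξ :=
      ae_restrict_of_ae_restrict_of_subset (fun x hx => le_trans hs hx.1) (hf.pde z hzD)
    have h2 : ∀ᵐ ξ ∂(volume.restrict (Icc s t)), ∀ w ∈ K, ‖G w ξ‖ ≤ C ξ :=
      ae_restrict_of_ae_restrict_of_subset (Icc_subset_Icc hs htT) hCb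
    have h3 := ae_restrict_mem (μ := (volume : Measure ℝ)) (s := Icc s t) measurableSet_Icc
    filter_upwards [h1, h2, h3] with ξ hd1 hd2 hξ
    refine ⟨hd1, ?_⟩
    have hξT : ξ ∈ Icc (0:ℝ) T := ⟨le_trans hs hξ.1, le_trans hξ.2 htT⟩
    have hball : Metric.ball z r ⊆ D :=
      le_trans (le_trans Metric.ball_subset_closedBall
        (Metric.closedBall_subset_cthickening hz r)) hK₂D
    have hop : ‖fderiv ℂ (f ξ) z‖ ≤ (2*M+1)/r := by
      refine aux_fderiv_norm_le hD.1 (hf.holomorphic ξ hξT.1) hr hball ?_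
      intro w hw
      exact hMb ξ hξT w (Metric.closedBall_subset_cthickening hz r
        (Metric.ball_subset_closedBall hw))
    calc ‖v ξ‖ = ‖fderiv ℂ (f ξ) z (G z ξ)‖ := norm_neg _
      _ ≤ ‖fderiv ℂ (f ξ) z‖ * ‖G z ξ‖ := ContinuousLinearMap.le_opNorm _ _
      _ ≤ ((2*M+1)/r) * C ξ := by
          refine mul_le_mul hop (hd2 z hz) (norm_nonneg _) (by positivity)
      _ = c' ξ := (indicator_of_mem hξT cg).symm
  have hac := hf.locAbsCont z hzD T hT
  have hmain := aux_ac_ftc hT hs hst htT hac hc'int hc'0 hae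
  have hint : (∫ ξ in s..t, c' ξ) = ∫ ξ in s..t, cg ξ := by
    refine intervalIntegral.integral_congr ?_
    intro ξ hξ
    rw [uIcc_of_le hst] at hξ
    exact Set.indicator_of_mem (show ξ ∈ Icc (0:ℝ) T from ⟨le_trans hs hξ.1, le_trans hξ.2 htT⟩) cg
  rw [norm_sub_rev]
  calc ‖f t z - f s z‖ ≤ ∫ ξ in s..t, c' ξ := hmain
    _ = ∫ ξ in s..t, cg ξ := hint
end
end

section
/- Let N ≥ 1, let D ⊆ ℂ^N be a bounded convex domain, let G : D × [0,∞) → ℂ^N be a Herglotz vector field of order d ∈ [1,∞] on D, and let (f_t : D → ℂ^N)_{t≥0} be a solution of the Loewner PDE for G. Then there exists a set E ⊆ [0,∞) of Lebesgue measure zero such that for every z ∈ D and every t ∈ [0,∞) \ E the partial derivative ∂f_t(z)/∂t exists and ∂f_t(z)/∂t = −df_t(z)·G(z,t). -/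
open MeasureTheory Set Metric Filter
open scoped ENNReal
open scoped Topology

noncomputable section

variable {N : ℕ}

section Aux
variable {D : Set (ℂN N)} {G : ℂN N → ℝ → ℂN N} {f : ℝ → ℂN N → ℂN N} {d : ℝ≥0∞}

lemma slice_hasDerivAt {F : ℂN N → ℂN N} {x u : ℂN N} (hF : DifferentiableAt ℂ F x) :
    HasDerivAt (fun ζ : ℂ => F (x + ζ • u)) (fderiv ℂ F x u) 0 := by
  have h1 : HasDerivAt (fun ζ : ℂ => x + ζ • u) u 0 := by
    simpa using ((hasDerivAt_id (0:ℂ)).smul_const u).const_add x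
  have h2 : HasFDerivAt F (fderiv ℂ F x) (x + (0:ℂ) • u) := by
    simpa using hF.hasFDerivAt
  have h3 := h2.comp_hasDerivAt 0 h1
  exact h3

/-- Cauchy-Schwarz type estimate for the differential at the center of a ball. -/
lemma fderiv_bound_of_ball {F : ℂN N → ℂN N} {x : ℂN N} {R M : ℝ} (hR : 0 < R)
    (hF : DifferentiableOn ℂ F (ball x R))
    (hM : ∀ y ∈ ball x R, ‖F y - F x‖ < M) (v : ℂN N) :
    ‖fderiv ℂ F x v‖ ≤ M / R * ‖v‖ := by
  rcases eq_or_ne v 0 with rfl | hv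
  · simp
  have hvn : (0:ℝ) < ‖v‖ := norm_pos_iff.2 hv
  set u : ℂN N := ‖v‖⁻¹ • v with hu
  have hun : ‖u‖ = 1 := by
    rw [hu, norm_smul, norm_inv, norm_norm, inv_mul_cancel₀ hvn.ne']
  have hmem : ∀ ζ : ℂ, ζ ∈ ball (0:ℂ) R → x + ζ • u ∈ ball x R := by
    intro ζ hζ
    simp only [mem_ball, dist_eq_norm] at hζ ⊢
    simpa [norm_smul, hun] using hζ
  have hφd : DifferentiableOn ℂ (fun ζ : ℂ => F (x + ζ • u)) (ball (0:ℂ) R) := by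
    apply hF.comp _ hmem
    intro ζ _
    exact (differentiable_id.smul_const u).const_add x |>.differentiableAt.differentiableWithinAt
  have hφ0 : (fun ζ : ℂ => F (x + ζ • u)) 0 = F x := by simp
  have hmaps : MapsTo (fun ζ : ℂ => F (x + ζ • u)) (ball (0:ℂ) R)
      (ball ((fun ζ : ℂ => F (x + ζ • u)) 0) M) := by
    intro ζ hζ
    simp only [mem_ball, dist_eq_norm, hφ0]
    exact hM _ (hmem ζ hζ)
  have := Complex.norm_dslope_le_div_of_mapsTo_ball hφd (hmaps.mono_right ball_subset_closedBall) (mem_ball_self hR)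
  rw [dslope_same] at this
  have hFx : DifferentiableAt ℂ F x :=
    hF.differentiableAt ((isOpen_ball).mem_nhds (mem_ball_self hR))
  have hder := (slice_hasDerivAt (u := u) hFx).deriv
  rw [hder] at this
  have hvu : fderiv ℂ F x v = ‖v‖ • fderiv ℂ F x u := by
    rw [← ContinuousLinearMap.map_smul_of_tower]
    congr 1
    rw [hu, smul_smul, mul_inv_cancel₀ hvn.ne', one_smul]
  rw [hvu, norm_smul, norm_norm, mul_comm]
  have hMR : 0 ≤ M / R := le_trans (norm_nonneg _) this
  exact mul_le_mul this le_rfl (norm_nonneg _) hMR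

/-- Lipschitz estimate from the center of a ball. -/
lemma lip_of_ball {F : ℂN N → ℂN N} {x : ℂN N} {R M : ℝ} (hR : 0 < R)
    (hF : DifferentiableOn ℂ F (ball x R))
    (hM : ∀ y ∈ ball x R, ‖F y - F x‖ < M) {y : ℂN N} (hy : y ∈ ball x R) :
    ‖F y - F x‖ ≤ M / R * ‖y - x‖ := by
  rcases eq_or_ne y x with rfl | hyx
  · simp
  have hvn : (0:ℝ) < ‖y - x‖ := by simp [sub_ne_zero.2 hyx]
  set u : ℂN N := ‖y - x‖⁻¹ • (y - x) with hu
  have hun : ‖u‖ = 1 := by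
    rw [hu, norm_smul, norm_inv, norm_norm, inv_mul_cancel₀ hvn.ne']
  have hmem : ∀ ζ : ℂ, ζ ∈ ball (0:ℂ) R → x + ζ • u ∈ ball x R := by
    intro ζ hζ
    simp only [mem_ball, dist_eq_norm] at hζ ⊢
    simpa [norm_smul, hun] using hζ
  have hφd : DifferentiableOn ℂ (fun ζ : ℂ => F (x + ζ • u)) (ball (0:ℂ) R) := by
    apply hF.comp _ hmem
    intro ζ _
    exact (differentiable_id.smul_const u).const_add x |>.differentiableAt.differentiableWithinAt
  have hφ0 : (fun ζ : ℂ => F (x + ζ • u)) 0 = F x := by simp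
  have hmaps : MapsTo (fun ζ : ℂ => F (x + ζ • u)) (ball (0:ℂ) R)
      (ball ((fun ζ : ℂ => F (x + ζ • u)) 0) M) := by
    intro ζ hζ
    simp only [mem_ball, dist_eq_norm, hφ0]
    exact hM _ (hmem ζ hζ)
  have hζmem : (‖y - x‖ : ℂ) ∈ ball (0:ℂ) R := by
    simp only [mem_ball, dist_zero_right, Complex.norm_real, Real.norm_eq_abs,
      abs_of_pos hvn]
    simpa [mem_ball, dist_eq_norm] using hy
  have := Complex.dist_le_div_mul_dist_of_mapsTo_ball hφd (hmaps.mono_right ball_subset_closedBall) hζmem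
  have hx : x + ‖y - x‖ • u = y := by
    rw [hu, smul_smul, mul_inv_cancel₀ hvn.ne', one_smul]
    abel
  simp only [zero_smul, add_zero, Complex.coe_smul, hx] at this
  simpa [dist_eq_norm, dist_zero_right, Complex.norm_real, Real.norm_eq_abs,
    abs_of_pos hvn] using this

lemma exists_uniform_bound (hf : IsLoewnerSolution f G D) {K : Set (ℂN N)}
    (hKD : K ⊆ D) (hK : IsCompact K) {m : ℝ} (hm : 0 < m) :
    ∃ M : ℝ, 0 ≤ M ∧ ∀ s ∈ Icc (0:ℝ) m, ∀ x ∈ K, ‖f s x‖ ≤ M := by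
  have h : ∀ t₀ : ℝ, t₀ ∈ Icc (0:ℝ) m → ∃ δ : ℝ, 0 < δ ∧ ∀ t : ℝ, 0 ≤ t → |t - t₀| < δ →
      ∀ z ∈ K, ‖f t z - f t₀ z‖ < 1 := fun t₀ ht₀ =>
    hf.continuous_t K hKD hK t₀ ht₀.1 1 one_pos
  choose! δ hδpos hδ using h
  have h2 : ∀ t₀ : ℝ, t₀ ∈ Icc (0:ℝ) m → ∃ M₀ : ℝ, ∀ x ∈ K, ‖f t₀ x‖ ≤ M₀ := fun t₀ ht₀ =>
    hK.exists_bound_of_continuousOn ((hf.holomorphic t₀ ht₀.1).continuousOn.mono hKD)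
  choose! M₀ hM₀ using h2
  obtain ⟨F, hFmem, hFcov⟩ := isCompact_Icc.elim_nhds_subcover (fun t₀ => ball t₀ (δ t₀))
    (fun t₀ ht₀ => ball_mem_nhds t₀ (hδpos t₀ ht₀))
  refine ⟨1 + ∑ t₀ ∈ F, |M₀ t₀|, by positivity, fun s hs x hx => ?_⟩
  obtain ⟨t₀, ht₀F, hst₀⟩ := mem_iUnion₂.1 (hFcov hs)
  have ht₀ : t₀ ∈ Icc (0:ℝ) m := hFmem t₀ ht₀F
  have h1 : ‖f s x - f t₀ x‖ < 1 := hδ t₀ ht₀ s hs.1 (by simpa [abs_sub_comm, dist_eq_norm] using hst₀) x hx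
  have h2 : ‖f t₀ x‖ ≤ |M₀ t₀| := le_trans (hM₀ t₀ ht₀ x hx) (le_abs_self _)
  have h3 : |M₀ t₀| ≤ ∑ t ∈ F, |M₀ t| :=
    Finset.single_le_sum (fun t _ => abs_nonneg (M₀ t)) ht₀F
  have h4 : ‖f s x‖ ≤ ‖f s x - f t₀ x‖ + ‖f t₀ x‖ := by
    simpa using norm_add_le (f s x - f t₀ x) (f t₀ x)
  linarith

lemma exists_Chat (hG : IsHerglotzVectorField G D d) (hd : 1 ≤ d)
    (hf : IsLoewnerSolution f G D) {w : ℂN N} {ρ σ : ℝ} (hρ : 0 < ρ) (hσ : 0 < σ)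
    (hsub : closedBall w (ρ + σ) ⊆ D) {m : ℝ} (hm : 0 < m) :
    ∃ c : ℝ → ℝ, (∀ s, 0 ≤ c s) ∧ IntegrableOn c (Icc (0:ℝ) m) ∧
      LocallyIntegrable c volume ∧
      ∀ᵐ s ∂(volume.restrict (Icc (0:ℝ) m)), ∀ x ∈ closedBall w ρ,
        ‖fderiv ℂ (f s) x (G x s)‖ ≤ c s := by
  obtain ⟨C, hC0, hCp, hCae⟩ := hG.lp_bound (closedBall w (ρ + σ)) hsub (isCompact_closedBall _ _) m hm
  obtain ⟨M, hM0, hM⟩ := exists_uniform_bound hf hsub (isCompact_closedBall _ _) hm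
  have hCint : IntegrableOn C (Icc (0:ℝ) m) := by
    haveI : IsFiniteMeasure (volume.restrict (Icc (0:ℝ) m)) :=
      ⟨by simp [Real.volume_Icc, lt_top_iff_ne_top]⟩
    exact memLp_one_iff_integrable.mp (hCp.mono_exponent hd)
  refine ⟨fun s => ((2*M+1)/σ) * (Icc (0:ℝ) m).indicator C s,
    fun s => mul_nonneg (by positivity) (Set.indicator_nonneg (fun t _ => hC0 t) s), ?_, ?_, ?_⟩
  · exact IntegrableOn.congr_fun (hCint.const_mul ((2*M+1)/σ))
      (fun x hx => by simp [Set.indicator_of_mem hx]) measurableSet_Icc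
  · exact (((integrable_indicator_iff measurableSet_Icc).2 hCint).const_mul _).locallyIntegrable
  · filter_upwards [hCae, ae_restrict_mem measurableSet_Icc] with s hs hsm
    intro x hx
    have hs0 : 0 ≤ s := hsm.1
    have hxK : x ∈ closedBall w (ρ + σ) :=
      closedBall_subset_closedBall (by linarith) hx
    have hball : ball x σ ⊆ closedBall w (ρ + σ) := fun y hy => by
      have : dist y w ≤ dist y x + dist x w := dist_triangle y x w
      simp only [mem_ball] at hy
      simp only [mem_closedBall] at hx ⊢
      linarith
    have hFd : DifferentiableOn ℂ (f s) (ball x σ) :=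
      (hf.holomorphic s hs0).mono (hball.trans hsub)
    have hbd : ∀ y ∈ ball x σ, ‖f s y - f s x‖ < 2*M+1 := by
      intro y hy
      have h1 : ‖f s y‖ ≤ M := hM s ⟨hs0, hsm.2⟩ y (hball hy)
      have h2 : ‖f s x‖ ≤ M := hM s ⟨hs0, hsm.2⟩ x hxK
      calc ‖f s y - f s x‖ ≤ ‖f s y‖ + ‖f s x‖ := norm_sub_le _ _
        _ < 2*M+1 := by linarith
    have := fderiv_bound_of_ball hσ hFd hbd (G x s)
    calc ‖fderiv ℂ (f s) x (G x s)‖ ≤ (2*M+1)/σ * ‖G x s‖ := this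
      _ ≤ ((2*M+1)/σ) * (Icc (0:ℝ) m).indicator C s := by
          rw [Set.indicator_of_mem hsm]
          exact mul_le_mul_of_nonneg_left (hs x hxK) (by positivity)

lemma growth_bound {u : ℝ → ℂN N} {c : ℝ → ℝ} {T : ℝ}
    (hu : AbsContOnIcc u T) (hc0 : ∀ s, 0 ≤ c s)
    (hci : IntegrableOn c (Icc (0:ℝ) T)) (hcl : LocallyIntegrable c volume)
    (hder : ∀ᵐ s ∂(volume.restrict (Icc (0:ℝ) T)),
      ∃ g : ℂN N, HasDerivAt u g s ∧ ‖g‖ ≤ c s)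
    {a b : ℝ} (ha : 0 ≤ a) (hab : a ≤ b) (hbT : b ≤ T) :
    ‖u b - u a‖ ≤ ∫ s in a..b, c s := by
  suffices h : ∀ ε : ℝ, 0 < ε → ‖u b - u a‖ ≤ (∫ s in a..b, c s) + ε * (b - a) + ε by
    refine le_of_forall_pos_le_add fun ε' hε' => ?_
    have hpos : (0:ℝ) < b - a + 1 := by linarith
    have h2 := h (ε' / (b - a + 1)) (by positivity)
    have h3 : ε' / (b - a + 1) * (b - a) + ε' / (b - a + 1) = ε' := by
      field_simp
    linarith
  intro ε hε
  obtain ⟨δ, hδ, hAC⟩ := hu ε hε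
  -- Lebesgue points
  have hleb : ∀ᵐ x ∂(volume : Measure ℝ),
      Tendsto (fun r => ⨍ y in closedBall x r, ‖c y - c x‖) (𝓝[>] 0) (𝓝 0) := by
    filter_upwards [(Besicovitch.vitaliFamily (volume : Measure ℝ)).ae_tendsto_average_norm_sub
      hcl] with x hx
    exact hx.comp (Besicovitch.tendsto_filterAt _ x)
  set Good : ℝ → Prop := fun x => (∃ g : ℂN N, HasDerivAt u g x ∧ ‖g‖ ≤ c x) ∧
    Tendsto (fun r => ⨍ y in closedBall x r, ‖c y - c x‖) (𝓝[>] 0) (𝓝 0) with hGooddef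
  have hgood : ∀ᵐ x ∂(volume.restrict (Icc (0:ℝ) T)), Good x :=
    hder.and (ae_restrict_of_ae hleb)
  obtain ⟨Z, hZsub, hZm, hZ0⟩ := exists_measurable_superset_of_null (ae_iff.1 hgood)
  have hZvol : volume (Z ∩ Icc (0:ℝ) T) = 0 := by
    rwa [Measure.restrict_apply hZm] at hZ0
  obtain ⟨U, hUsub, hUopen, hUvol⟩ := Set.exists_isOpen_lt_of_lt (Z ∩ Icc (0:ℝ) T)
    (ENNReal.ofReal δ) (by rw [hZvol]; exact ENNReal.ofReal_pos.2 hδ)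
  have hIccsub : Icc a b ⊆ Icc (0:ℝ) T := Icc_subset_Icc ha hbT
  have hdich : ∀ x ∈ Icc a b, Good x ∨ x ∈ U := by
    intro x hx
    refine or_iff_not_imp_left.2 fun hbad => hUsub ⟨hZsub hbad, hIccsub hx⟩
  -- interval integrability
  have hII : ∀ p q : ℝ, p ∈ Icc (0:ℝ) T → q ∈ Icc (0:ℝ) T → IntervalIntegrable c volume p q :=
    fun p q hp hq => (hci.mono_set (uIcc_subset_Icc hp hq)).intervalIntegrable
  -- quantitative Lebesgue point
  have hlebq : ∀ x : ℝ,
      Tendsto (fun r => ⨍ y in closedBall x r, ‖c y - c x‖) (𝓝[>] 0) (𝓝 0) →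
      ∃ η > 0, ∀ l : ℝ, 0 < l → l < η →
        (∫ y in Icc (x - l) (x + l), |c y - c x|) ≤ ε / 2 * l := by
    intro x hx
    have hev : ∀ᶠ r in 𝓝[>] (0:ℝ), (⨍ y in closedBall x r, ‖c y - c x‖) < ε / 8 :=
      hx.eventually_lt_const (by linarith)
    rw [eventually_nhdsWithin_iff, Metric.eventually_nhds_iff] at hev
    obtain ⟨η, hη, hev⟩ := hev
    refine ⟨η, hη, fun l hl hlη => ?_⟩
    have havg := hev (by rw [Real.dist_eq, sub_zero, abs_of_pos hl]; exact hlη) hl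
    have hvol : (volume (closedBall x l)).toReal = 2 * l := by
      rw [Real.volume_closedBall, ENNReal.toReal_ofReal (by linarith)]
    have havg_eq : (⨍ y in closedBall x l, ‖c y - c x‖)
        = (2 * l)⁻¹ * ∫ y in closedBall x l, ‖c y - c x‖ := by
      rw [setAverage_eq, measureReal_def, hvol, smul_eq_mul]
    have hnn : 0 ≤ ∫ y in closedBall x l, ‖c y - c x‖ :=
      setIntegral_nonneg measurableSet_closedBall (fun y _ => norm_nonneg _)
    have h2l : (0:ℝ) < 2 * l := by linarith
    have hint : (∫ y in closedBall x l, ‖c y - c x‖) ≤ 2 * l * (ε / 8) := by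
      rw [havg_eq] at havg
      calc (∫ y in closedBall x l, ‖c y - c x‖)
          = 2 * l * ((2*l)⁻¹ * ∫ y in closedBall x l, ‖c y - c x‖) := by
            field_simp
        _ ≤ 2 * l * (ε / 8) := by
            exact mul_le_mul_of_nonneg_left havg.le h2l.le
    have : Icc (x - l) (x + l) = closedBall x l := Real.closedBall_eq_Icc.symm
    rw [this]
    calc (∫ y in closedBall x l, |c y - c x|)
        = ∫ y in closedBall x l, ‖c y - c x‖ := by
          simp only [Real.norm_eq_abs]
      _ ≤ 2 * l * (ε / 8) := hint
      _ ≤ ε / 2 * l := by nlinarith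
  -- good-point two-sided estimate
  have hgood_est : ∀ x ∈ Icc a b, Good x → ∃ η > 0, ∀ y ∈ Icc a b, |y - x| < η →
      ‖u x - u y‖ ≤ (∫ s in (min x y)..(max x y), c s) + ε * |y - x| := by
    intro x hxI hGx
    obtain ⟨⟨g, hgd, hgle⟩, hlebx⟩ := hGx
    obtain ⟨η₁, hη₁, hleb1⟩ := hlebq x hlebx
    have hlo := (hasDerivAt_iff_isLittleO.1 hgd).def (show (0:ℝ) < ε/2 by linarith)
    rw [Metric.eventually_nhds_iff] at hlo
    obtain ⟨η₂, hη₂, hlo⟩ := hlo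
    refine ⟨min η₁ η₂, lt_min hη₁ hη₂, fun y hyI hyd => ?_⟩
    rcases eq_or_ne y x with rfl | hyx
    · simp
    set l := |y - x| with hl
    have hlpos : 0 < l := abs_pos.2 (sub_ne_zero.2 hyx)
    have hlη₁ : l < η₁ := lt_of_lt_of_le hyd (min_le_left _ _)
    have hlη₂ : l < η₂ := lt_of_lt_of_le hyd (min_le_right _ _)
    -- derivative estimate
    have hd1 : ‖u y - u x - (y - x) • g‖ ≤ ε/2 * ‖y - x‖ := by
      have := hlo (show dist y x < η₂ by rwa [Real.dist_eq])
      simpa using this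
    have hest_u : ‖u x - u y‖ ≤ (c x + ε/2) * l := by
      have h1 : ‖u y - u x‖ ≤ ‖(y - x) • g‖ + ε/2 * ‖y - x‖ := by
        have := norm_add_le (u y - u x - (y - x) • g) ((y - x) • g)
        simp only [sub_add_cancel] at this
        linarith
      rw [norm_smul, Real.norm_eq_abs] at h1
      rw [norm_sub_rev]
      calc ‖u y - u x‖ ≤ |y - x| * ‖g‖ + ε/2 * |y - x| := h1
        _ ≤ |y - x| * c x + ε/2 * |y - x| := by
            have := mul_le_mul_of_nonneg_left hgle (abs_nonneg (y - x))
            linarith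
        _ = (c x + ε/2) * l := by rw [hl]; ring
    -- integral estimate
    have hminmax : min x y ∈ Icc (0:ℝ) T ∧ max x y ∈ Icc (0:ℝ) T := by
      constructor
      · rcases min_choice x y with h | h <;> rw [h]
        exacts [hIccsub hxI, hIccsub hyI]
      · rcases max_choice x y with h | h <;> rw [h]
        exacts [hIccsub hxI, hIccsub hyI]
    have habs := abs_le.1 (le_of_eq hl.symm)
    have hIcc_sub : Icc (min x y) (max x y) ⊆ Icc (x - l) (x + l) :=
      Icc_subset_Icc (le_min (by linarith [hlpos]) (by linarith [habs.1]))
        (max_le (by linarith [hlpos]) (by linarith [habs.2]))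
    -- ∫ |c - c x| over the interval is small
    have hbig_int : IntegrableOn (fun y => |c y - c x|) (Icc (x - l) (x + l)) volume := by
      have h1 : IntegrableOn c (Icc (x - l) (x + l)) volume :=
        hcl.integrableOn_isCompact isCompact_Icc
      exact (h1.sub (integrableOn_const (by
        rw [Real.volume_Icc]; exact ENNReal.ofReal_ne_top))).abs
    have hsmall : (∫ s in Ioc (min x y) (max x y), |c s - c x|)
        ≤ ε / 2 * l := by
      refine le_trans (setIntegral_mono_set hbig_int
        (Eventually.of_forall fun s => abs_nonneg _)
        (HasSubset.Subset.eventuallyLE (Ioc_subset_Icc_self.trans hIcc_sub))) ?_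
      exact hleb1 l hlpos hlη₁
    have hmm : min x y ≤ max x y := min_le_max
    have hlen : max x y - min x y = l := by
      rcases le_total x y with h | h
      · rw [max_eq_right h, min_eq_left h, hl, abs_of_nonneg (by linarith)]
      · rw [max_eq_left h, min_eq_right h, hl, abs_of_nonpos (by linarith)]; ring
    have hIIloc : IntervalIntegrable (fun s => |c s - c x|) volume (min x y) (max x y) := by
      apply IntegrableOn.intervalIntegrable
      apply hbig_int.mono_set
      rw [uIcc_of_le hmm]
      exact hIcc_sub
    have hIIc : IntervalIntegrable c volume (min x y) (max x y) :=
      hII _ _ hminmax.1 hminmax.2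
    have hint_lower : c x * l - ε / 2 * l ≤ ∫ s in (min x y)..(max x y), c s := by
      have h1 : (∫ s in (min x y)..(max x y), c s)
          = c x * l + ∫ s in (min x y)..(max x y), (c s - c x) := by
        rw [intervalIntegral.integral_sub hIIc intervalIntegrable_const,
          intervalIntegral.integral_const, smul_eq_mul, hlen]
        ring
      have h2 : |∫ s in (min x y)..(max x y), (c s - c x)| ≤ ε / 2 * l := by
        refine le_trans (intervalIntegral.abs_integral_le_integral_abs hmm) ?_
        rw [intervalIntegral.integral_of_le hmm]
        exact hsmall
      have h3 := (abs_le.1 h2).1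
      rw [h1]
      linarith
    rw [hl] at hest_u ⊢
    calc ‖u x - u y‖ ≤ (c x + ε/2) * l := by rw [hl]; exact hest_u
      _ = c x * l - ε/2 * l + ε * l := by ring
      _ ≤ (∫ s in (min x y)..(max x y), c s) + ε * l := by linarith
      _ = (∫ s in (min x y)..(max x y), c s) + ε * |y - x| := by rw [hl]
  -- U-step helper
  have hstep_U : ∀ x ∈ U, ∃ η > 0, ∀ y : ℝ, |y - x| < η →
      Ioo (min x y) (max x y) ⊆ U := by
    intro x hxU
    obtain ⟨η, hη, hball⟩ := Metric.isOpen_iff.1 hUopen x hxU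
    refine ⟨η, hη, fun y hyd s hs => ?_⟩
    apply hball
    simp only [mem_ball, Real.dist_eq]
    rcases le_total x y with h | h
    · rw [min_eq_left h, max_eq_right h] at hs
      rw [abs_of_nonneg (by linarith [hs.1])]
      have : |y - x| = y - x := abs_of_nonneg (by linarith)
      rw [this] at hyd
      linarith [hs.2]
    · rw [min_eq_right h, max_eq_left h] at hs
      rw [abs_of_nonpos (by linarith [hs.2])]
      have : |y - x| = x - y := by rw [abs_of_nonpos (by linarith)]; ring
      rw [this] at hyd
      linarith [hs.1]
  -- the inductive predicate
  set Q : ℝ → Prop := fun x => ∃ n : ℕ, ∃ p q : Fin n → ℝ,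
    (∀ i, a ≤ p i ∧ p i ≤ q i ∧ q i ≤ x) ∧
    (∀ i, Ioo (p i) (q i) ⊆ U) ∧
    (∀ i j, i ≠ j → Disjoint (Ioo (p i) (q i)) (Ioo (p j) (q j))) ∧
    ‖u x - u a‖ ≤ (∫ s in a..x, c s) + ε * (x - a) + ∑ i, ‖u (q i) - u (p i)‖
    with hQdef
  set A : Set ℝ := {x | x ∈ Icc a b ∧ Q x} with hAdef
  have haQ : Q a := by
    refine ⟨0, Fin.elim0, Fin.elim0, fun i => i.elim0, fun i => i.elim0,
      fun i => i.elim0, ?_⟩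
    simp
  have hAmem : a ∈ A := ⟨⟨le_refl a, hab⟩, haQ⟩
  have hAbdd : BddAbove A := ⟨b, fun x hx => hx.1.2⟩
  set x₀ := sSup A with hx₀def
  have hax₀ : a ≤ x₀ := le_csSup hAbdd hAmem
  have hx₀b : x₀ ≤ b := csSup_le ⟨a, hAmem⟩ fun y hy => hy.1.2
  have hx₀I : x₀ ∈ Icc a b := ⟨hax₀, hx₀b⟩
  have hnear : ∀ η : ℝ, 0 < η → ∃ y ∈ A, x₀ - η < y := by
    intro η hη
    by_contra h
    push_neg at h
    have := csSup_le ⟨a, hAmem⟩ fun y hy => h y hy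
    linarith
  -- claim 1 : Q x₀
  have hQx₀ : Q x₀ := by
    rcases hdich x₀ hx₀I with hGx | hUx
    · obtain ⟨η, hη, hest⟩ := hgood_est x₀ hx₀I hGx
      obtain ⟨y, hyA, hy⟩ := hnear η hη
      have hyx₀ : y ≤ x₀ := le_csSup hAbdd hyA
      obtain ⟨n, p, q, hb', hU', hdisj, hineq⟩ := hyA.2
      refine ⟨n, p, q, fun i => ⟨(hb' i).1, (hb' i).2.1, le_trans (hb' i).2.2 hyx₀⟩,
        hU', hdisj, ?_⟩
      have hyd : |y - x₀| < η := by
        rw [abs_of_nonpos (by linarith)]; linarith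
      have hest' := hest y hyA.1 hyd
      rw [min_eq_right hyx₀, max_eq_left hyx₀, abs_of_nonpos (by linarith)] at hest'
      have hadd : (∫ s in a..y, c s) + (∫ s in y..x₀, c s) = ∫ s in a..x₀, c s :=
        intervalIntegral.integral_add_adjacent_intervals
          (hII a y (hIccsub ⟨le_refl a, hab⟩) (hIccsub hyA.1))
          (hII y x₀ (hIccsub hyA.1) (hIccsub hx₀I))
      have htri : ‖u x₀ - u a‖ ≤ ‖u y - u a‖ + ‖u x₀ - u y‖ := by
        have heq : u x₀ - u a = (u y - u a) + (u x₀ - u y) := by abel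
        rw [heq]; exact norm_add_le _ _
      linarith
    · obtain ⟨η, hη, hIoo⟩ := hstep_U x₀ hUx
      obtain ⟨y, hyA, hy⟩ := hnear η hη
      have hyx₀ : y ≤ x₀ := le_csSup hAbdd hyA
      rcases eq_or_lt_of_le hyx₀ with rfl | hylt
      · exact hyA.2
      obtain ⟨n, p, q, hb', hU', hdisj, hineq⟩ := hyA.2
      have hIooU : Ioo y x₀ ⊆ U := by
        have := hIoo y (by rw [abs_of_nonpos (by linarith)]; linarith)
        rwa [min_eq_right hyx₀, max_eq_left hyx₀] at this
      refine ⟨n + 1, Fin.snoc p y, Fin.snoc q x₀, ?_, ?_, ?_, ?_⟩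
      · intro i
        refine Fin.lastCases ?_ (fun j => ?_) i
        · simp only [Fin.snoc_last]
          exact ⟨hyA.1.1, hyx₀, le_refl _⟩
        · simp only [Fin.snoc_castSucc]
          exact ⟨(hb' j).1, (hb' j).2.1, le_trans ((hb' j).2.2) hyx₀⟩
      · intro i
        refine Fin.lastCases ?_ (fun j => ?_) i
        · simp only [Fin.snoc_last]; exact hIooU
        · simp only [Fin.snoc_castSucc]; exact hU' j
      · intro i j hij
        rcases Fin.eq_castSucc_or_eq_last i with ⟨i', rfl⟩ | rfl <;>
          rcases Fin.eq_castSucc_or_eq_last j with ⟨j', rfl⟩ | rfl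
        · simp only [Fin.snoc_castSucc]
          exact hdisj i' j' fun h => hij (by rw [h])
        · simp only [Fin.snoc_last, Fin.snoc_castSucc]
          rw [Set.disjoint_left]
          intro s hs hs'
          exact absurd hs'.1 (not_lt.2 (le_trans hs.2.le (hb' i').2.2))
        · simp only [Fin.snoc_last, Fin.snoc_castSucc]
          rw [Set.disjoint_left]
          intro s hs hs'
          exact absurd hs.1 (not_lt.2 (le_trans hs'.2.le (hb' j').2.2))
        · exact absurd rfl hij
      · have hsum : (∑ i : Fin (n+1), ‖u ((Fin.snoc q x₀ : Fin (n+1) → ℝ) i) - u ((Fin.snoc p y : Fin (n+1) → ℝ) i)‖)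
            = (∑ i : Fin n, ‖u (q i) - u (p i)‖) + ‖u x₀ - u y‖ := by
          rw [Fin.sum_univ_castSucc]
          simp only [Fin.snoc_castSucc, Fin.snoc_last]
        rw [hsum]
        have hadd : (∫ s in a..y, c s) + (∫ s in y..x₀, c s) = ∫ s in a..x₀, c s :=
          intervalIntegral.integral_add_adjacent_intervals
            (hII a y (hIccsub ⟨le_refl a, hab⟩) (hIccsub hyA.1))
            (hII y x₀ (hIccsub hyA.1) (hIccsub hx₀I))
        have hnn : 0 ≤ ∫ s in y..x₀, c s :=
          intervalIntegral.integral_nonneg hylt.le fun s _ => hc0 s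
        have htri : ‖u x₀ - u a‖ ≤ ‖u y - u a‖ + ‖u x₀ - u y‖ := by
          have heq : u x₀ - u a = (u y - u a) + (u x₀ - u y) := by abel
          rw [heq]; exact norm_add_le _ _
        have hmono : ε * (y - a) ≤ ε * (x₀ - a) :=
          mul_le_mul_of_nonneg_left (by linarith) hε.le
        linarith
  have hx₀A : x₀ ∈ A := ⟨hx₀I, hQx₀⟩
  -- claim 2 : x₀ = b
  have hx₀eq : x₀ = b := by
    by_contra hne
    have hlt : x₀ < b := lt_of_le_of_ne hx₀b hne
    obtain ⟨n, p, q, hb', hU', hdisj, hineq⟩ := hQx₀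
    rcases hdich x₀ hx₀I with hGx | hUx
    · obtain ⟨η, hη, hest⟩ := hgood_est x₀ hx₀I hGx
      set y := min b (x₀ + η/2) with hydef
      have hx₀y : x₀ < y := lt_min hlt (by linarith)
      have hyb : y ≤ b := min_le_left _ _
      have hyI : y ∈ Icc a b := ⟨by linarith, hyb⟩
      have hyd : |y - x₀| < η := by
        rw [abs_of_pos (by linarith)]
        have : y ≤ x₀ + η/2 := min_le_right _ _
        linarith
      have hest' := hest y hyI hyd
      rw [min_eq_left hx₀y.le, max_eq_right hx₀y.le, abs_of_pos (by linarith)] at hest'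
      have hQy : Q y := by
        refine ⟨n, p, q, fun i => ⟨(hb' i).1, (hb' i).2.1, le_trans (hb' i).2.2 hx₀y.le⟩,
          hU', hdisj, ?_⟩
        have hadd : (∫ s in a..x₀, c s) + (∫ s in x₀..y, c s) = ∫ s in a..y, c s :=
          intervalIntegral.integral_add_adjacent_intervals
            (hII a x₀ (hIccsub ⟨le_refl a, hab⟩) (hIccsub hx₀I))
            (hII x₀ y (hIccsub hx₀I) (hIccsub hyI))
        have htri : ‖u y - u a‖ ≤ ‖u x₀ - u a‖ + ‖u y - u x₀‖ := by
          have heq : u y - u a = (u x₀ - u a) + (u y - u x₀) := by abel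
          rw [heq]; exact norm_add_le _ _
        rw [norm_sub_rev] at hest'
        linarith
      have : y ≤ x₀ := le_csSup hAbdd ⟨hyI, hQy⟩
      linarith
    · obtain ⟨η, hη, hIoo⟩ := hstep_U x₀ hUx
      set y := min b (x₀ + η/2) with hydef
      have hx₀y : x₀ < y := lt_min hlt (by linarith)
      have hyb : y ≤ b := min_le_left _ _
      have hyI : y ∈ Icc a b := ⟨by linarith, hyb⟩
      have hyd : |y - x₀| < η := by
        rw [abs_of_pos (by linarith)]
        have : y ≤ x₀ + η/2 := min_le_right _ _
        linarith
      have hIooU : Ioo x₀ y ⊆ U := by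
        have := hIoo y hyd
        rwa [min_eq_left hx₀y.le, max_eq_right hx₀y.le] at this
      have hQy : Q y := by
        refine ⟨n + 1, Fin.snoc p x₀, Fin.snoc q y, ?_, ?_, ?_, ?_⟩
        · intro i
          refine Fin.lastCases ?_ (fun j => ?_) i
          · simp only [Fin.snoc_last]
            exact ⟨hax₀, hx₀y.le, le_refl _⟩
          · simp only [Fin.snoc_castSucc]
            exact ⟨(hb' j).1, (hb' j).2.1, le_trans ((hb' j).2.2) hx₀y.le⟩
        · intro i
          refine Fin.lastCases ?_ (fun j => ?_) i
          · simp only [Fin.snoc_last]; exact hIooU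
          · simp only [Fin.snoc_castSucc]; exact hU' j
        · intro i j hij
          rcases Fin.eq_castSucc_or_eq_last i with ⟨i', rfl⟩ | rfl <;>
            rcases Fin.eq_castSucc_or_eq_last j with ⟨j', rfl⟩ | rfl
          · simp only [Fin.snoc_castSucc]
            exact hdisj i' j' fun h => hij (by rw [h])
          · simp only [Fin.snoc_last, Fin.snoc_castSucc]
            rw [Set.disjoint_left]
            intro s hs hs'
            exact absurd hs'.1 (not_lt.2 (le_trans hs.2.le (hb' i').2.2))
          · simp only [Fin.snoc_last, Fin.snoc_castSucc]
            rw [Set.disjoint_left]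
            intro s hs hs'
            exact absurd hs.1 (not_lt.2 (le_trans hs'.2.le (hb' j').2.2))
          · exact absurd rfl hij
        · have hsum : (∑ i : Fin (n+1), ‖u ((Fin.snoc q y : Fin (n+1) → ℝ) i) - u ((Fin.snoc p x₀ : Fin (n+1) → ℝ) i)‖)
              = (∑ i : Fin n, ‖u (q i) - u (p i)‖) + ‖u y - u x₀‖ := by
            rw [Fin.sum_univ_castSucc]
            simp only [Fin.snoc_castSucc, Fin.snoc_last]
          rw [hsum]
          have hadd : (∫ s in a..x₀, c s) + (∫ s in x₀..y, c s) = ∫ s in a..y, c s :=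
            intervalIntegral.integral_add_adjacent_intervals
              (hII a x₀ (hIccsub ⟨le_refl a, hab⟩) (hIccsub hx₀I))
              (hII x₀ y (hIccsub hx₀I) (hIccsub hyI))
          have hnn : 0 ≤ ∫ s in x₀..y, c s :=
            intervalIntegral.integral_nonneg hx₀y.le fun s _ => hc0 s
          have htri : ‖u y - u a‖ ≤ ‖u x₀ - u a‖ + ‖u y - u x₀‖ := by
            have heq : u y - u a = (u x₀ - u a) + (u y - u x₀) := by abel
            rw [heq]; exact norm_add_le _ _
          have hmono : ε * (x₀ - a) ≤ ε * (y - a) :=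
            mul_le_mul_of_nonneg_left (by linarith) hε.le
          linarith
      have : y ≤ x₀ := le_csSup hAbdd ⟨hyI, hQy⟩
      linarith
  -- conclude from Q b
  rw [hx₀eq] at hQx₀
  obtain ⟨n, p, q, hb', hU', hdisj, hineq⟩ := hQx₀
  have hlensum : (∑ i, (q i - p i)) < δ := by
    have hmeas : ∀ i : Fin n, MeasurableSet (Ioo (p i) (q i)) := fun i => measurableSet_Ioo
    have hdisj' : Pairwise (Function.onFun Disjoint fun i => Ioo (p i) (q i)) :=
      fun i j hij => hdisj i j hij
    have h1 : volume (⋃ i, Ioo (p i) (q i)) = ∑' i : Fin n, volume (Ioo (p i) (q i)) :=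
      measure_iUnion hdisj' hmeas
    have h2 : (⋃ i, Ioo (p i) (q i)) ⊆ U := iUnion_subset hU'
    have h3 : ENNReal.ofReal (∑ i, (q i - p i)) = ∑' i : Fin n, volume (Ioo (p i) (q i)) := by
      rw [tsum_fintype]
      rw [ENNReal.ofReal_sum_of_nonneg fun i _ => by linarith [(hb' i).2.1]]
      congr 1
      ext i
      rw [Real.volume_Ioo]
    have h4 : ENNReal.ofReal (∑ i, (q i - p i)) < ENNReal.ofReal δ := by
      rw [h3, ← h1]
      exact lt_of_le_of_lt (measure_mono h2) hUvol
    exact (ENNReal.ofReal_lt_ofReal_iff hδ).1 h4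
  have hnormsum : (∑ i, ‖u (q i) - u (p i)‖) < ε := by
    refine hAC n p q (fun i => ⟨le_trans ha (hb' i).1, ?_⟩)
      (fun i => ⟨le_trans ha (le_trans (hb' i).1 (hb' i).2.1), ?_⟩)
      (fun i => (hb' i).2.1) hdisj hlensum
    · exact le_trans (hb' i).2.1 (le_trans (hb' i).2.2 hbT)
    · exact le_trans (hb' i).2.2 hbT
  linarith

set_option synthInstance.maxHeartbeats 1000000 in
lemma fderiv_apply_continuousAt (hG : IsHerglotzVectorField G D d)
    (hf : IsLoewnerSolution f G D) (hD : IsOpen D) {t : ℝ} (ht : 0 ≤ t)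
    {z : ℂN N} (hz : z ∈ D) :
    Tendsto (fun x => fderiv ℂ (f t) x (G x t)) (𝓝 z)
      (𝓝 (fderiv ℂ (f t) z (G z t))) := by
  obtain ⟨ε₀, hε₀, hball⟩ := Metric.isOpen_iff.1 hD z hz
  set R := ε₀ / 4 with hRdef
  have hR : 0 < R := by positivity
  have hRD : closedBall z (3 * R) ⊆ D := by
    refine (closedBall_subset_ball ?_).trans hball
    rw [hRdef]; linarith
  obtain ⟨M₁, hM₁⟩ := (isCompact_closedBall z (3 * R)).exists_bound_of_continuousOn
    ((hf.holomorphic t ht).continuousOn.mono hRD)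
  have hM₁0 : 0 ≤ M₁ :=
    le_trans (norm_nonneg _) (hM₁ z (mem_closedBall_self (by positivity)))
  set L₁ := (2 * M₁ + 1) / R with hL₁def
  have hL₁0 : 0 ≤ L₁ := by positivity
  have hsub2 : ∀ x' ∈ ball z R, ball x' R ⊆ closedBall z (3 * R) := by
    intro x' hx' y hy
    simp only [mem_ball, mem_closedBall] at *
    have := dist_triangle y x' z
    linarith
  have hLip : ∀ x' ∈ ball z R, ∀ y ∈ ball x' R, ‖f t y - f t x'‖ ≤ L₁ * ‖y - x'‖ := by
    intro x' hx' y hy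
    have hd : DifferentiableOn ℂ (f t) (ball x' R) :=
      (hf.holomorphic t ht).mono ((hsub2 x' hx').trans hRD)
    have hbd : ∀ y' ∈ ball x' R, ‖f t y' - f t x'‖ < 2 * M₁ + 1 := by
      intro y' hy'
      have h1 := hM₁ y' (hsub2 x' hx' hy')
      have h2 := hM₁ x' (hsub2 x' hx' (mem_ball_self hR))
      have := norm_sub_le (f t y') (f t x')
      linarith
    have := lip_of_ball hR hd hbd hy
    rwa [hL₁def]
  -- difference of differentials
  have hkey : ∀ x ∈ ball z R, ∀ v : ℂN N,
      ‖fderiv ℂ (f t) x v - fderiv ℂ (f t) z v‖ ≤ (2 * L₁ + 1) / R * ‖x - z‖ * ‖v‖ := by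
    intro x hx v
    rcases eq_or_ne x z with rfl | hxz
    · simp
    have hxz' : (0:ℝ) < ‖x - z‖ := by simp [sub_ne_zero.2 hxz]
    set Φ : ℂN N → ℂN N := fun y => f t (y + (x - z)) - f t y with hΦdef
    have hxR : ‖x - z‖ < R := by simpa [mem_ball, dist_eq_norm] using hx
    have hmaps : ∀ y : ℂN N, y + (x - z) ∈ ball y R := by
      intro y
      simp only [mem_ball, dist_eq_norm]
      simpa using hxR
    have hball2 : ∀ y ∈ ball z R, ball y R ⊆ D := fun y hy =>
      (hsub2 y hy).trans hRD
    have hΦd : DifferentiableOn ℂ Φ (ball z R) := by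
      apply DifferentiableOn.sub
      · apply DifferentiableOn.comp (t := D) (hf.holomorphic t ht)
        · exact (differentiable_id.add_const _).differentiableOn
        · intro y hy
          exact hball2 y hy (hmaps y)
      · exact (hf.holomorphic t ht).mono (hball2 z (mem_ball_self hR))
    have hΦbd : ∀ y ∈ ball z R, ‖Φ y - Φ z‖ < (2 * L₁ + 1) * ‖x - z‖ := by
      intro y hy
      have h1 : ‖Φ y‖ ≤ L₁ * ‖x - z‖ := by
        have := hLip y hy (y + (x - z)) (hmaps y)
        simpa [hΦdef] using this
      have h2 : ‖Φ z‖ ≤ L₁ * ‖x - z‖ := by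
        have := hLip z (mem_ball_self hR) (z + (x - z)) (hmaps z)
        simpa [hΦdef] using this
      have := norm_sub_le (Φ y) (Φ z)
      nlinarith
    have hbd := fderiv_bound_of_ball hR hΦd hΦbd v
    have hfx : HasFDerivAt (f t) (fderiv ℂ (f t) x) x :=
      ((hf.holomorphic t ht).differentiableAt
        (hD.mem_nhds (hball2 z (mem_ball_self hR) (by simpa [mem_ball, dist_eq_norm] using hxR)))).hasFDerivAt
    have hfz : HasFDerivAt (f t) (fderiv ℂ (f t) z) z :=
      ((hf.holomorphic t ht).differentiableAt (hD.mem_nhds hz)).hasFDerivAt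
    have h1 : HasFDerivAt (fun y : ℂN N => f t (y + (x - z))) (fderiv ℂ (f t) x) z := by
      have htr : HasFDerivAt (fun y : ℂN N => y + (x - z))
          (ContinuousLinearMap.id ℂ (ℂN N)) z := (hasFDerivAt_id z).add_const _
      have hfx' : HasFDerivAt (f t) (fderiv ℂ (f t) x) (z + (x - z)) := by
        rw [show z + (x - z) = x by abel]; exact hfx
      have h := hfx'.comp z htr
      rw [ContinuousLinearMap.comp_id] at h
      exact h
    have hΦder : HasFDerivAt Φ (fderiv ℂ (f t) x - fderiv ℂ (f t) z) z := h1.sub hfz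
    have hfd : fderiv ℂ Φ z = fderiv ℂ (f t) x - fderiv ℂ (f t) z := hΦder.fderiv
    calc ‖fderiv ℂ (f t) x v - fderiv ℂ (f t) z v‖
        = ‖fderiv ℂ Φ z v‖ := by rw [hfd]; rfl
      _ ≤ (2 * L₁ + 1) * ‖x - z‖ / R * ‖v‖ := hbd
      _ = (2 * L₁ + 1) / R * ‖x - z‖ * ‖v‖ := by ring
  -- conclude continuity
  have hGc : Tendsto (fun x => G x t) (𝓝 z) (𝓝 (G z t)) :=
    ((hG.holomorphic t ht).continuousOn.continuousAt (hD.mem_nhds hz))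
  rw [tendsto_iff_norm_sub_tendsto_zero]
  have hbound : ∀ᶠ x in 𝓝 z, ‖fderiv ℂ (f t) x (G x t) - fderiv ℂ (f t) z (G z t)‖
      ≤ (2 * L₁ + 1) / R * ‖x - z‖ * ‖G x t‖
        + ‖fderiv ℂ (f t) z‖ * ‖G x t - G z t‖ := by
    filter_upwards [ball_mem_nhds z hR] with x hx
    have heq : fderiv ℂ (f t) x (G x t) - fderiv ℂ (f t) z (G z t)
        = (fderiv ℂ (f t) x (G x t) - fderiv ℂ (f t) z (G x t))
          + fderiv ℂ (f t) z (G x t - G z t) := by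
      rw [map_sub]; abel
    rw [heq]
    refine le_trans (norm_add_le _ _) (add_le_add ?_ ?_)
    · exact hkey x hx (G x t)
    · exact (fderiv ℂ (f t) z).le_opNorm _
  have hlim : Tendsto (fun x : ℂN N => (2 * L₁ + 1) / R * ‖x - z‖ * ‖G x t‖
      + ‖fderiv ℂ (f t) z‖ * ‖G x t - G z t‖) (𝓝 z) (𝓝 0) := by
    have t1 : Tendsto (fun x : ℂN N => ‖x - z‖) (𝓝 z) (𝓝 0) := by
      have : Tendsto (fun x : ℂN N => x - z) (𝓝 z) (𝓝 (z - z)) :=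
        (continuous_id.sub continuous_const).tendsto z
      simpa using this.norm
    have t2 : Tendsto (fun x => ‖G x t‖) (𝓝 z) (𝓝 ‖G z t‖) := hGc.norm
    have t3 : Tendsto (fun x => ‖G x t - G z t‖) (𝓝 z) (𝓝 0) := by
      have : Tendsto (fun x => G x t - G z t) (𝓝 z) (𝓝 (G z t - G z t)) :=
        hGc.sub tendsto_const_nhds
      simpa using this.norm
    have := ((tendsto_const_nhds (x := (2 * L₁ + 1) / R)).mul t1).mul t2
    have h4 := this.add ((tendsto_const_nhds (x := ‖fderiv ℂ (f t) z‖)).mul t3)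
    simpa using h4
  exact squeeze_zero' (Eventually.of_forall fun x => norm_nonneg _) hbound hlim
end Aux

set_option maxHeartbeats 2000000 in
/-- For a solution of the Loewner PDE the exceptional null set can be chosen
independently of the point `z ∈ D`. -/
theorem loewner_solution_common_null_set
    (N : ℕ) (hN : 1 ≤ N) (D : Set (ℂN N)) (hD : IsDomainSet D)
    (hDbdd : Bornology.IsBounded D) (hDconv : Convex ℝ D)
    (d : ℝ≥0∞) (hd : 1 ≤ d) (G : ℂN N → ℝ → ℂN N)
    (hG : IsHerglotzVectorField G D d)
    (f : ℝ → ℂN N → ℂN N) (hf : IsLoewnerSolution f G D) :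
    ∃ E : Set ℝ, E ⊆ Ici (0:ℝ) ∧ volume E = 0 ∧
      ∀ z ∈ D, ∀ t ∈ Ici (0:ℝ) \ E,
        HasDerivAt (fun s : ℝ => f s z) (-(fderiv ℂ (f t) z (G z t))) t := by
  classical
  have hDopen : IsOpen D := hD.1
  -- countable dense subset of `D`
  obtain ⟨s₀, hs₀c, hs₀d⟩ := TopologicalSpace.exists_countable_dense (↥D)
  set S : Set (ℂN N) := (Subtype.val) '' s₀ with hSdef
  have hSc : S.Countable := hs₀c.image _
  have hSD : S ⊆ D := by rintro _ ⟨x, -, rfl⟩; exact x.2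
  have hSdense : ∀ z ∈ D, ∀ τ : ℝ, 0 < τ → ∃ w ∈ S, ‖w - z‖ < τ := by
    intro z hz τ hτ
    have hcont : Continuous fun x : ↥D => ‖(x : ℂN N) - z‖ :=
      (continuous_subtype_val.sub continuous_const).norm
    have hopen : IsOpen {x : ↥D | ‖(x : ℂN N) - z‖ < τ} :=
      isOpen_lt hcont continuous_const
    obtain ⟨x, hxs₀, hx⟩ := hs₀d.exists_mem_open hopen ⟨⟨z, hz⟩, by simpa using hτ⟩
    exact ⟨x, ⟨x, hxs₀, rfl⟩, hx⟩
  -- per-point bad sets for the PDE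
  have hpde : ∀ w, w ∈ D → ∃ Z : Set ℝ, volume (Z ∩ Ici 0) = 0 ∧ ∀ t ∈ Ici (0:ℝ), t ∉ Z →
      HasDerivAt (fun s : ℝ => f s w) (-(fderiv ℂ (f t) w (G w t))) t := by
    intro w hw
    obtain ⟨Z, hZsub, hZm, hZ0⟩ := exists_measurable_superset_of_null (ae_iff.1 (hf.pde w hw))
    refine ⟨Z, by rwa [Measure.restrict_apply hZm] at hZ0, fun t _ htZ => ?_⟩
    by_contra hcon
    exact htZ (hZsub hcon)
  choose! Zw hZw0 hZw using hpde
  -- bound functions for countably many parameters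
  set cond : ℂN N × ℝ × ℕ → Prop := fun v => v.1 ∈ S ∧ (∃ q : ℚ, (q:ℝ) = v.2.1) ∧
    0 < v.2.1 ∧ closedBall v.1 (v.2.1 + v.2.1) ⊆ D ∧ 0 < (v.2.2 : ℝ) with hconddef
  have hchat : ∀ v : ℂN N × ℝ × ℕ, cond v → ∃ c : ℝ → ℝ, (∀ s, 0 ≤ c s) ∧
      IntegrableOn c (Icc (0:ℝ) v.2.2) ∧ LocallyIntegrable c volume ∧
      ∀ᵐ s ∂(volume.restrict (Icc (0:ℝ) v.2.2)), ∀ x ∈ closedBall v.1 v.2.1,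
        ‖fderiv ℂ (f s) x (G x s)‖ ≤ c s := by
    rintro v ⟨-, -, hρ, hsub, hm⟩
    exact exists_Chat hG hd hf hρ hρ hsub hm
  choose! chat hchat0 hchatInt hchatLoc hchatAe using hchat
  -- Lebesgue point bad sets
  have hlebv : ∀ v : ℂN N × ℝ × ℕ, ∃ L : Set ℝ, volume L = 0 ∧ (∀ t ∉ L,
      Tendsto (fun l => ⨍ y in closedBall t l, ‖chat v y - chat v t‖)
        (𝓝[>] (0:ℝ)) (𝓝 0)) ∨ ¬ cond v ∧ L = ∅ := by
    intro v
    by_cases hv : cond v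
    · have hae : ∀ᵐ x ∂(volume : Measure ℝ),
          Tendsto (fun l => ⨍ y in closedBall x l, ‖chat v y - chat v x‖)
            (𝓝[>] (0:ℝ)) (𝓝 0) := by
        filter_upwards [(Besicovitch.vitaliFamily (volume : Measure ℝ)).ae_tendsto_average_norm_sub
          (hchatLoc v hv)] with x hx
        exact hx.comp (Besicovitch.tendsto_filterAt _ x)
      refine ⟨toMeasurable volume {x | ¬ Tendsto (fun l => ⨍ y in closedBall x l,
        ‖chat v y - chat v x‖) (𝓝[>] (0:ℝ)) (𝓝 0)}, Or.inl ⟨?_, ?_⟩⟩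
      · rw [measure_toMeasurable]; exact ae_iff.1 hae
      · intro t ht
        by_contra hcon
        exact ht (subset_toMeasurable _ _ hcon)
    · exact ⟨∅, Or.inr ⟨hv, rfl⟩⟩
  choose Lv hLv using hlebv
  have hLv0 : ∀ v, volume (Lv v) = 0 := by
    intro v
    rcases hLv v with ⟨h, -⟩ | ⟨-, h⟩
    · exact h
    · rw [h]; exact measure_empty
  have hLvT : ∀ v, cond v → ∀ t ∉ Lv v,
      Tendsto (fun l => ⨍ y in closedBall t l, ‖chat v y - chat v t‖)
        (𝓝[>] (0:ℝ)) (𝓝 0) := by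
    intro v hv t ht
    rcases hLv v with ⟨-, h⟩ | ⟨h, -⟩
    · exact h t ht
    · exact absurd hv h
  set VV : Set (ℂN N × ℝ × ℕ) := {v | cond v} with hVVdef
  have hVVc : VV.Countable := by
    have hsub : VV ⊆ S ×ˢ ((Set.range (fun q : ℚ => (q:ℝ))) ×ˢ (univ : Set ℕ)) := by
      rintro ⟨w, ρ, m⟩ ⟨h1, ⟨q, hq⟩, -, -, -⟩
      exact ⟨h1, ⟨q, hq⟩, trivial⟩
    exact Countable.mono hsub (hSc.prod ((countable_range _).prod countable_univ))
  refine ⟨Ici 0 ∩ ({0} ∪ ((⋃ w ∈ S, Zw w ∩ Ici 0) ∪ (⋃ v ∈ VV, Lv v))), inter_subset_left,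
    ?_, ?_⟩
  · refine measure_mono_null inter_subset_right ?_
    refine measure_union_null (by simp) (measure_union_null ?_ ?_)
    · rw [measure_biUnion_null_iff hSc]
      exact fun w hw => hZw0 w (hSD hw)
    · rw [measure_biUnion_null_iff hVVc]
      exact fun v _ => hLv0 v
  · intro z hz t ht
    set E := Ici (0:ℝ) ∩ ({0} ∪ ((⋃ w ∈ S, Zw w ∩ Ici 0) ∪ (⋃ v ∈ VV, Lv v))) with hEdef
    have ht0 : t ∈ Ici (0:ℝ) := ht.1
    have htpos : 0 < t := by
      rcases eq_or_lt_of_le (show (0:ℝ) ≤ t from ht0) with h | h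
      · exact absurd ⟨ht0, Or.inl h.symm⟩ ht.2
      · exact h
    have htZ : ∀ w ∈ S, HasDerivAt (fun s : ℝ => f s w) (-(fderiv ℂ (f t) w (G w t))) t := by
      intro w hw
      refine hZw w (hSD hw) t ht0 fun hcon =>
        ht.2 ⟨ht0, Or.inr (Or.inl (mem_biUnion hw ⟨hcon, ht0⟩))⟩
    have htL : ∀ v ∈ VV, t ∉ Lv v := fun v hv hcon =>
      ht.2 ⟨ht0, Or.inr (Or.inr (mem_biUnion hv hcon))⟩
    -- geometric setup
    obtain ⟨ε₀, hε₀, hballD⟩ := Metric.isOpen_iff.1 hDopen z hz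
    set r := ε₀ / 12 with hrdef
    have hr : 0 < r := by positivity
    obtain ⟨m, hmt⟩ := exists_nat_gt t
    have hm0 : (0:ℝ) < m := lt_trans htpos hmt
    obtain ⟨w₀, hw₀S, hw₀z⟩ := hSdense z hz r hr
    obtain ⟨qρ, hqρ1, hqρ2⟩ := exists_rat_btwn (show 4*r < 5*r by linarith)
    set ρ : ℝ := (qρ : ℝ) with hρdef
    have hρpos : 0 < ρ := by linarith
    set v : ℂN N × ℝ × ℕ := (w₀, ρ, m) with hvdef
    have hsubD : closedBall w₀ (ρ + ρ) ⊆ D := by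
      intro x hx
      apply hballD
      simp only [mem_closedBall, dist_eq_norm] at hx
      simp only [mem_ball, dist_eq_norm]
      have h1 : ‖x - z‖ ≤ ‖x - w₀‖ + ‖w₀ - z‖ := by
        have := norm_add_le (x - w₀) (w₀ - z)
        simpa using this
      linarith
    have hcondv : cond v := ⟨hw₀S, ⟨qρ, rfl⟩, hρpos, hsubD, hm0⟩
    have hvVV : v ∈ VV := hcondv
    set c := chat v with hcdef
    have hc0 : ∀ s, 0 ≤ c s := hchat0 v hcondv
    have hsub1 : ball z (2*r) ⊆ closedBall w₀ ρ := by
      intro x hx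
      simp only [mem_ball, dist_eq_norm] at hx
      simp only [mem_closedBall, dist_eq_norm]
      have h1 : ‖x - w₀‖ ≤ ‖x - z‖ + ‖z - w₀‖ := by
        have := norm_add_le (x - z) (z - w₀)
        simpa using this
      have h2 : ‖z - w₀‖ = ‖w₀ - z‖ := norm_sub_rev _ _
      linarith
    have hKD : closedBall w₀ ρ ⊆ D :=
      (closedBall_subset_closedBall (by linarith)).trans hsubD
    -- step A : growth bound
    have hA : ∀ x ∈ closedBall w₀ ρ, ∀ a' b' : ℝ, 0 ≤ a' → a' ≤ b' → b' ≤ (m:ℝ) →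
        ‖f b' x - f a' x‖ ≤ ∫ s in a'..b', c s := by
      intro x hx a' b' h1 h2 h3
      have hxD : x ∈ D := hKD hx
      have hder : ∀ᵐ s ∂(volume.restrict (Icc (0:ℝ) m)),
          ∃ g : ℂN N, HasDerivAt (fun s' : ℝ => f s' x) g s ∧ ‖g‖ ≤ c s := by
        have hres : volume.restrict (Icc (0:ℝ) (m:ℝ)) ≤ volume.restrict (Ici (0:ℝ)) :=
          Measure.restrict_mono (fun s hs => hs.1) le_rfl
        filter_upwards [Eventually.filter_mono (ae_mono hres) (hf.pde x hxD),
          hchatAe v hcondv] with s hs1 hs2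
        exact ⟨_, hs1, by rw [norm_neg]; exact hs2 x hx⟩
      exact growth_bound (hf.locAbsCont x hxD m hm0) hc0 (hchatInt v hcondv)
        (hchatLoc v hcondv) hder h1 h2 h3
    -- Lebesgue point at t, quantitative
    have hlebt := hLvT v hcondv t (htL v hvVV)
    set B₀ := 2 * c t + 1 with hB₀def
    have hB₀pos : 0 < B₀ := by have := hc0 t; rw [hB₀def]; linarith
    obtain ⟨η₁, hη₁, hleb1⟩ : ∃ η₁ > 0, ∀ l : ℝ, 0 < l → l < η₁ →
        (∫ y in Icc (t - l) (t + l), c y) ≤ B₀ * l := by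
      have hev : ∀ᶠ l in 𝓝[>] (0:ℝ), (⨍ y in closedBall t l, ‖c y - c t‖) < 1/2 :=
        hlebt.eventually_lt_const (by norm_num)
      rw [eventually_nhdsWithin_iff, Metric.eventually_nhds_iff] at hev
      obtain ⟨η, hη, hev⟩ := hev
      refine ⟨η, hη, fun l hl hlη => ?_⟩
      have havg := hev (show dist l 0 < η by
        rw [Real.dist_eq, sub_zero, abs_of_pos hl]; exact hlη) hl
      have hvol : (volume (closedBall t l)).toReal = 2 * l := by
        rw [Real.volume_closedBall, ENNReal.toReal_ofReal (by linarith)]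
      have h2l : (0:ℝ) < 2 * l := by linarith
      have havg_eq : (⨍ y in closedBall t l, ‖c y - c t‖)
          = (2*l)⁻¹ * ∫ y in closedBall t l, ‖c y - c t‖ := by
        rw [setAverage_eq, measureReal_def, hvol, smul_eq_mul]
      have hcint : IntegrableOn c (closedBall t l) volume :=
        (hchatLoc v hcondv).integrableOn_isCompact (isCompact_closedBall _ _)
      have hnint : IntegrableOn (fun y => ‖c y - c t‖) (closedBall t l) volume := by
        refine (hcint.sub ?_).norm
        exact integrableOn_const (by
          rw [Real.volume_closedBall]; exact ENNReal.ofReal_ne_top)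
      have habs : (∫ y in closedBall t l, ‖c y - c t‖) ≤ l := by
        rw [havg_eq] at havg
        have := mul_le_mul_of_nonneg_left havg.le h2l.le
        calc (∫ y in closedBall t l, ‖c y - c t‖)
            = 2*l * ((2*l)⁻¹ * ∫ y in closedBall t l, ‖c y - c t‖) := by
              field_simp
          _ ≤ 2*l*(1/2) := this
          _ = l := by ring
      have h1 : (∫ y in closedBall t l, c y)
          ≤ ∫ y in closedBall t l, (c t + ‖c y - c t‖) := by
        refine setIntegral_mono_on hcint ?_ measurableSet_closedBall ?_
        · exact (integrableOn_const (by
            rw [Real.volume_closedBall]; exact ENNReal.ofReal_ne_top)).add hnint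
        · intro y _
          have := le_abs_self (c y - c t)
          rw [Real.norm_eq_abs]
          linarith
      have h2 : (∫ y in closedBall t l, (c t + ‖c y - c t‖))
          = c t * (2*l) + ∫ y in closedBall t l, ‖c y - c t‖ := by
        rw [integral_add (integrableOn_const (C := c t) (by
          rw [Real.volume_closedBall]; exact ENNReal.ofReal_ne_top)) hnint,
          setIntegral_const, measureReal_def, hvol, smul_eq_mul]
        ring
      have hct := hc0 t
      calc (∫ y in Icc (t - l) (t + l), c y)
          = ∫ y in closedBall t l, c y := by rw [Real.closedBall_eq_Icc]
        _ ≤ c t * (2*l) + l := by rw [h2] at h1; linarith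
        _ ≤ B₀ * l := by rw [hB₀def]; nlinarith
    -- step B : difference bound
    have hB : ∀ y : ℝ, y ≠ t → |y - t| < min η₁ (min t ((m:ℝ) - t)) →
        ∀ x ∈ closedBall w₀ ρ, ‖f y x - f t x‖ ≤ B₀ * |y - t| := by
      intro y hy hyd x hx
      set l := |y - t| with hldef
      have hl : 0 < l := abs_pos.2 (sub_ne_zero.2 hy)
      have hlη₁ : l < η₁ := lt_of_lt_of_le hyd (min_le_left _ _)
      have hlt : l < t := lt_of_lt_of_le hyd ((min_le_right _ _).trans (min_le_left _ _))
      have hlm : l < (m:ℝ) - t :=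
        lt_of_lt_of_le hyd ((min_le_right _ _).trans (min_le_right _ _))
      have habs := abs_le.1 (le_of_eq hldef.symm)
      have hint_cmp : (∫ s in (min t y)..(max t y), c s)
          ≤ ∫ s' in Icc (t - l) (t + l), c s' := by
        have hbig : IntegrableOn c (Icc (t - l) (t + l)) volume := by
          have := (hchatLoc v hcondv).integrableOn_isCompact (isCompact_Icc
            (a := t - l) (b := t + l))
          exact this
        have hIccsub : Ioc (min t y) (max t y) ⊆ Icc (t - l) (t + l) := by
          refine Ioc_subset_Icc_self.trans (Icc_subset_Icc ?_ ?_)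
          · exact le_min (by linarith) (by linarith [habs.1])
          · exact max_le (by linarith) (by linarith [habs.2])
        rw [intervalIntegral.integral_of_le min_le_max]
        exact setIntegral_mono_set hbig
          (Eventually.of_forall fun s => hc0 s)
          (HasSubset.Subset.eventuallyLE hIccsub)
      have hgrow := hA x hx (min t y) (max t y)
        (le_min (by linarith) (by linarith [habs.1]))
        min_le_max
        (max_le (by linarith) (by linarith [habs.2]))
      have hfin : ‖f (max t y) x - f (min t y) x‖ ≤ B₀ * l :=
        le_trans hgrow (le_trans hint_cmp (hleb1 l hl hlη₁))
      rcases le_total t y with h | h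
      · rwa [min_eq_left h, max_eq_right h] at hfin
      · rw [min_eq_right h, max_eq_left h] at hfin
        rwa [norm_sub_rev]
    -- step C : Schwarz estimate for difference quotients
    have hC : ∀ y : ℝ, y ≠ t → |y - t| < min η₁ (min t ((m:ℝ) - t)) →
        ∀ x ∈ ball z (2*r),
        ‖(y - t)⁻¹ • (f y x - f t x) - (y - t)⁻¹ • (f y z - f t z)‖
          ≤ (2*B₀+1)/(2*r) * ‖x - z‖ := by
      intro y hy hyd
      have hlt : |y - t| < t := lt_of_lt_of_le hyd
        ((min_le_right _ _).trans (min_le_left _ _))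
      have hy0 : 0 ≤ y := by
        have := (abs_lt.1 hlt).1
        linarith
      have hl : 0 < |y - t| := abs_pos.2 (sub_ne_zero.2 hy)
      set Q : ℂN N → ℂN N := fun x => (y - t)⁻¹ • (f y x - f t x) with hQdef
      have hsubD' : ball z (2*r) ⊆ D := hsub1.trans hKD
      have hQd : DifferentiableOn ℂ Q (ball z (2*r)) :=
        (((hf.holomorphic y hy0).mono hsubD').sub
          ((hf.holomorphic t htpos.le).mono hsubD')).const_smul ((y - t)⁻¹ : ℝ)
      have hzball : z ∈ ball z (2*r) := mem_ball_self (by linarith)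
      have hnq : ∀ x' ∈ ball z (2*r), ‖Q x'‖ ≤ B₀ := by
        intro x' hx'
        have hBx := hB y hy hyd x' (hsub1 hx')
        rw [hQdef]
        rw [norm_smul, norm_inv, Real.norm_eq_abs]
        rw [inv_mul_le_iff₀ hl]
        calc ‖f y x' - f t x'‖ ≤ B₀ * |y - t| := hBx
          _ = |y - t| * B₀ := by ring
      have hQbd : ∀ x' ∈ ball z (2*r), ‖Q x' - Q z‖ < 2*B₀ + 1 := by
        intro x' hx'
        have h1 := hnq x' hx'
        have h2 := hnq z hzball
        have := norm_sub_le (Q x') (Q z)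
        linarith
      intro x hx
      exact lip_of_ball (by linarith : (0:ℝ) < 2*r) hQd hQbd hx
    -- continuity of the candidate derivative
    have hgc := fderiv_apply_continuousAt hG hf hDopen htpos.le hz
    rw [Metric.tendsto_nhds_nhds] at hgc
    -- conclusion via slopes
    rw [hasDerivAt_iff_tendsto_slope, Metric.tendsto_nhdsWithin_nhds]
    intro ε hε
    set L := (2*B₀+1)/(2*r) with hLdef
    have hLpos : 0 < L := div_pos (by linarith) (by linarith)
    obtain ⟨τ, hτ, hgc'⟩ := hgc (ε/4) (by linarith)
    obtain ⟨w₁, hw₁S, hw₁z⟩ := hSdense z hz (min τ (min r (ε/4/L)))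
      (lt_min hτ (lt_min hr (div_pos (by linarith) hLpos)))
    have hw₁τ : ‖w₁ - z‖ < τ := lt_of_lt_of_le hw₁z (min_le_left _ _)
    have hw₁r : ‖w₁ - z‖ < r :=
      lt_of_lt_of_le hw₁z ((min_le_right _ _).trans (min_le_left _ _))
    have hw₁L : ‖w₁ - z‖ < ε/4/L :=
      lt_of_lt_of_le hw₁z ((min_le_right _ _).trans (min_le_right _ _))
    have hw₁ball : w₁ ∈ ball z (2*r) := by
      simp only [mem_ball, dist_eq_norm]
      linarith
    have hder₁ := htZ w₁ hw₁S
    rw [hasDerivAt_iff_tendsto_slope, Metric.tendsto_nhdsWithin_nhds] at hder₁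
    obtain ⟨η₂, hη₂, hder₁⟩ := hder₁ (ε/4) (by linarith)
    refine ⟨min (min η₁ (min t ((m:ℝ) - t))) η₂,
      lt_min (lt_min hη₁ (lt_min htpos (by linarith))) hη₂, ?_⟩
    intro y hyne hyd
    have hyne' : y ≠ t := hyne
    have hyd1 : |y - t| < min η₁ (min t ((m:ℝ) - t)) := by
      rw [Real.dist_eq] at hyd
      exact lt_of_lt_of_le hyd (min_le_left _ _)
    have hyd2 : dist y t < η₂ := lt_of_lt_of_le hyd (min_le_right _ _)
    have hs1 := hder₁ hyne hyd2
    have hs2' := hC y hyne' hyd1 w₁ hw₁ball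
    have hs2 : ‖(y - t)⁻¹ • (f y w₁ - f t w₁) - (y - t)⁻¹ • (f y z - f t z)‖ < ε/4 := by
      refine lt_of_le_of_lt hs2' ?_
      have := mul_lt_mul_of_pos_left hw₁L hLpos
      rw [hLdef]
      calc (2*B₀+1)/(2*r) * ‖w₁ - z‖ < (2*B₀+1)/(2*r) * (ε/4/L) := by
            rw [hLdef] at this; exact this
        _ = ε/4 := by
            rw [hLdef]
            field_simp
    have hs3 := hgc' (show dist w₁ z < τ by rw [dist_eq_norm]; exact hw₁τ)
    rw [dist_eq_norm] at hs1 hs3 ⊢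
    have hslope_z : slope (fun s : ℝ => f s z) t y = (y - t)⁻¹ • (f y z - f t z) := by
      rw [slope_def_module]
    have hslope_w : slope (fun s : ℝ => f s w₁) t y = (y - t)⁻¹ • (f y w₁ - f t w₁) := by
      rw [slope_def_module]
    rw [hslope_z] at *
    rw [hslope_w] at hs1
    set A1 := (y - t)⁻¹ • (f y z - f t z)
    set A2 := (y - t)⁻¹ • (f y w₁ - f t w₁)
    set B1 := -(fderiv ℂ (f t) w₁ (G w₁ t))
    set B2 := -(fderiv ℂ (f t) z (G z t))
    have htri : ‖A1 - B2‖ ≤ ‖A1 - A2‖ + ‖A2 - B1‖ + ‖B1 - B2‖ := by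
      have heq : A1 - B2 = (A1 - A2) + (A2 - B1) + (B1 - B2) := by abel
      rw [heq]
      refine le_trans (norm_add_le _ _) ?_
      have := norm_add_le (A1 - A2) (A2 - B1)
      linarith
    have hB1B2 : ‖B1 - B2‖ = ‖fderiv ℂ (f t) w₁ (G w₁ t) - fderiv ℂ (f t) z (G z t)‖ := by
      have heq : B1 - B2 = -(fderiv ℂ (f t) w₁ (G w₁ t) - fderiv ℂ (f t) z (G z t)) := by
        simp only [B1, B2]; abel
      rw [heq, norm_neg]
    have hA1A2 : ‖A1 - A2‖ = ‖A2 - A1‖ := norm_sub_rev _ _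
    rw [hB1B2] at htri
    rw [hA1A2] at htri
    calc ‖A1 - B2‖ ≤ ‖A2 - A1‖ + ‖A2 - B1‖
        + ‖fderiv ℂ (f t) w₁ (G w₁ t) - fderiv ℂ (f t) z (G z t)‖ := htri
      _ < ε/4 + ε/4 + ε/4 := by
          refine add_lt_add (add_lt_add_of_lt_of_lt ?_ hs1) hs3
          exact hs2
      _ < ε := by linarith
end
end

section
/- Let N ≥ 2, let U ⊆ ℂ^N be a domain, let F : U → ℂ^N be an injective holomorphic map which is a biholomorphism onto the open set V := F(U), and let (α_j) be a sequence of holomorphic automorphisms of ℂ^N such that the inverses α_j^{-1} converge to F uniformly on every compact subset of U. Then α_j converges to F^{-1} uniformly on every compact subset of V. -/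
open MeasureTheory Set Metric Filter
open scoped ENNReal

noncomputable section

variable {N : ℕ}

/-- A preconnected set meeting both a set and its complement meets its frontier. -/
lemma aux_inter_frontier_nonempty {X : Type*} [TopologicalSpace X] {s t : Set X}
    (hs : IsPreconnected s) (h1 : (s ∩ t).Nonempty) (h2 : (s \ t).Nonempty) :
    (s ∩ frontier t).Nonempty := by
  by_contra h
  rw [Set.not_nonempty_iff_eq_empty] at h
  have hdisj : ∀ x ∈ s, x ∉ frontier t := fun x hx hxf =>
    (Set.eq_empty_iff_forall_notMem.mp h x) ⟨hx, hxf⟩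
  have := hs (interior t) (closure t)ᶜ isOpen_interior (isClosed_closure.isOpen_compl)
    (fun x hx => by
      by_cases hxc : x ∈ closure t
      · left
        by_contra hxi
        exact hdisj x hx ⟨hxc, hxi⟩
      · right; exact hxc)
    (by
      obtain ⟨x, hxs, hxt⟩ := h1
      refine ⟨x, hxs, ?_⟩
      by_contra hxi
      exact hdisj x hxs ⟨subset_closure hxt, hxi⟩)
    (by
      obtain ⟨y, hys, hyt⟩ := h2
      refine ⟨y, hys, fun hyc => ?_⟩
      exact hdisj y hys ⟨hyc, fun hyi => hyt (interior_subset hyi)⟩)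
  obtain ⟨x, _, hxi, hxc⟩ := this
  exact hxc (subset_closure (interior_subset hxi))

/-- If the inverses of a sequence of automorphisms of `ℂ^N` converge locally
uniformly on `U` to a biholomorphism `F : U → V`, then the automorphisms converge locally
uniformly on `V` to `F⁻¹`. -/
theorem automorphism_inverses_converge
    (N : ℕ) (hN : 2 ≤ N) (U : Set (ℂN N)) (hU : IsDomainSet U)
    (F F' : ℂN N → ℂN N) (hF : DifferentiableOn ℂ F U) (hFinj : InjOn F U)
    (hV : IsOpen (F '' U)) (hF' : DifferentiableOn ℂ F' (F '' U))
    (hinv : ∀ z ∈ U, F' (F z) = z)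
    (α β : ℕ → ℂN N → ℂN N)
    (hauto : ∀ j, Differentiable ℂ (α j) ∧ Differentiable ℂ (β j) ∧
      Function.LeftInverse (β j) (α j) ∧ Function.RightInverse (β j) (α j))
    (hconv : ∀ K : Set (ℂN N), K ⊆ U → IsCompact K →
      TendstoUniformlyOn (fun j => β j) F atTop K) :
    ∀ K : Set (ℂN N), K ⊆ F '' U → IsCompact K →
      TendstoUniformlyOn (fun j => α j) F' atTop K := by
  intro K hKV hK
  rcases K.eq_empty_or_nonempty with rfl | hKne
  · exact tendstoUniformlyOn_empty
  have hUopen : IsOpen U := hU.1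
  rw [Metric.tendstoUniformlyOn_iff]
  intro ε hε
  -- the compact set of preimages
  set L : Set (ℂN N) := F' '' K with hLdef
  have hLU : L ⊆ U := by
    rintro _ ⟨w, hw, rfl⟩
    obtain ⟨u, hu, rfl⟩ := hKV hw
    rw [hinv u hu]; exact hu
  have hLc : IsCompact L := hK.image_of_continuousOn (hF'.continuousOn.mono hKV)
  obtain ⟨δ, hδpos, hδ⟩ := hLc.exists_cthickening_subset_open hUopen hLU
  set r : ℝ := min δ (ε / 2) with hrdef
  have hrpos : 0 < r := lt_min hδpos (by linarith)
  have hrε : r < ε := lt_of_le_of_lt (min_le_right _ _) (by linarith)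
  set M : Set (ℂN N) := Metric.cthickening r L with hMdef
  have hMU : M ⊆ U := le_trans (Metric.cthickening_mono (min_le_left _ _) L) hδ
  have hMc : IsCompact M := hLc.cthickening
  have hLM : L ⊆ M := Metric.self_subset_cthickening L
  have hballM : ∀ z ∈ L, Metric.closedBall z r ⊆ M := fun z hz =>
    Metric.closedBall_subset_cthickening hz r
  -- the compact set of pairs at distance exactly r
  set A : Set (ℂN N × ℂN N) := {p | p.1 ∈ L ∧ p.2 ∈ M ∧ dist p.2 p.1 = r} with hAdef
  have hAc : IsCompact A := by
    have h1 : IsClosed {p : ℂN N × ℂN N | p.1 ∈ L} :=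
      hLc.isClosed.preimage continuous_fst
    have h2 : IsClosed {p : ℂN N × ℂN N | p.2 ∈ M} :=
      hMc.isClosed.preimage continuous_snd
    have h3 : IsClosed {p : ℂN N × ℂN N | dist p.2 p.1 = r} :=
      isClosed_eq (continuous_snd.dist continuous_fst) continuous_const
    have hAclosed : IsClosed A := by
      have : A = ({p : ℂN N × ℂN N | p.1 ∈ L} ∩ {p | p.2 ∈ M}) ∩ {p | dist p.2 p.1 = r} := by
        ext p; simp [hAdef, and_assoc]
      rw [this]
      exact (h1.inter h2).inter h3
    exact (hLc.prod hMc).of_isClosed_subset hAclosed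
      (fun p hp => Set.mk_mem_prod hp.1 hp.2.1)
  have hAne : A.Nonempty := by
    obtain ⟨w₀, hw₀⟩ := hKne
    have hnorm : ‖(r : ℂ) • EuclideanSpace.single (⟨0, by omega⟩ : Fin N) (1 : ℂ)‖ = r := by
      rw [norm_smul, EuclideanSpace.norm_single]
      simp [Complex.norm_real, Real.norm_eq_abs, abs_of_nonneg hrpos.le]
    refine ⟨(F' w₀, F' w₀ + (r : ℂ) • EuclideanSpace.single (⟨0, by omega⟩ : Fin N) (1 : ℂ)),
      ⟨w₀, hw₀, rfl⟩, ?_, ?_⟩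
    · apply hballM _ ⟨w₀, hw₀, rfl⟩
      simp only [Metric.mem_closedBall, dist_self_add_left, hnorm, le_refl]
    · simp only [dist_self_add_left, hnorm]
  -- minimum separation d
  have hcontA : ContinuousOn (fun p : ℂN N × ℂN N => dist (F p.1) (F p.2)) A := by
    have hFc : ContinuousOn F U := hF.continuousOn
    have c1 : ContinuousOn (fun p : ℂN N × ℂN N => F p.1) A :=
      hFc.comp continuousOn_fst (fun p hp => hLU hp.1)
    have c2 : ContinuousOn (fun p : ℂN N × ℂN N => F p.2) A :=
      hFc.comp continuousOn_snd (fun p hp => hMU hp.2.1)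
    exact continuous_dist.comp_continuousOn (c1.prodMk c2)
  obtain ⟨p₀, hp₀A, hp₀min⟩ := hAc.exists_isMinOn hAne hcontA
  set d : ℝ := dist (F p₀.1) (F p₀.2) with hddef
  have hdpos : 0 < d := by
    rw [hddef, dist_pos]
    intro heq
    have h1 : p₀.1 ∈ U := hLU hp₀A.1
    have h2 : p₀.2 ∈ U := hMU hp₀A.2.1
    have := hFinj h1 h2 heq
    have : dist p₀.2 p₀.1 = 0 := by rw [this]; simp
    rw [hp₀A.2.2] at this
    linarith
  have hdle : ∀ z ∈ L, ∀ y ∈ M, dist y z = r → d ≤ dist (F z) (F y) :=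
    fun z hz y hy hdist => hp₀min (a := (z, y)) ⟨hz, hy, hdist⟩
  -- find uniform index
  have hconvM := Metric.tendstoUniformlyOn_iff.mp (hconv M hMU hMc) (d / 3) (by linarith)
  filter_upwards [hconvM] with j hj
  intro w hw
  -- setup for a fixed w ∈ K
  obtain ⟨u, huU, huw⟩ := hKV hw
  set z : ℂN N := F' w with hzdef
  have hzu : z = u := by rw [hzdef, ← huw, hinv u huU]
  have hzL : z ∈ L := ⟨w, hw, rfl⟩
  have hFz : F z = w := by rw [hzu, huw]
  have hzM : z ∈ M := hLM hzL
  -- the automorphism as a homeomorphism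
  obtain ⟨hαd, hβd, hlι, hrι⟩ := hauto j
  let e : ℂN N ≃ₜ ℂN N :=
    { toFun := β j
      invFun := α j
      left_inv := fun x => hrι x
      right_inv := fun x => hlι x
      continuous_toFun := hβd.continuous
      continuous_invFun := hαd.continuous }
  -- claim: w ∈ β j '' closedBall z r
  have hwin : w ∈ β j '' Metric.closedBall z r := by
    by_contra hwnot
    set S : Set (ℂN N) := β j '' Metric.closedBall z r with hSdef
    have hcS : β j z ∈ S := ⟨z, Metric.mem_closedBall_self hrpos.le, rfl⟩
    have hcw : dist (β j z) w < d / 3 := by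
      have := hj z hzM
      rw [hFz] at this
      rw [dist_comm]; exact this
    -- segment from β j z to w
    have hseg : IsPreconnected (segment ℝ (β j z) w) :=
      (convex_segment _ _).isPreconnected
    have hmeet : ((segment ℝ (β j z) w) ∩ S).Nonempty :=
      ⟨β j z, left_mem_segment _ _ _, hcS⟩
    have hmiss : ((segment ℝ (β j z) w) \ S).Nonempty :=
      ⟨w, right_mem_segment _ _ _, hwnot⟩
    obtain ⟨x, hxseg, hxfr⟩ := aux_inter_frontier_nonempty hseg hmeet hmiss
    -- frontier S = β j '' sphere z r
    have hfr : frontier S = β j '' Metric.sphere z r := by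
      rw [hSdef]
      have : (β j '' Metric.closedBall z r) = e '' Metric.closedBall z r := rfl
      rw [this, ← e.image_frontier, frontier_closedBall z (ne_of_gt hrpos)]
      rfl
    rw [hfr] at hxfr
    obtain ⟨y, hysph, hyx⟩ := hxfr
    have hyM : y ∈ M := hballM z hzL (Metric.sphere_subset_closedBall hysph)
    -- x is close to w
    have hxw : dist x w ≤ dist (β j z) w := by
      have hsub : segment ℝ (β j z) w ⊆ Metric.closedBall w (dist (β j z) w) := by
        apply (convex_closedBall w (dist (β j z) w)).segment_subset
        · exact Metric.mem_closedBall.mpr le_rfl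
        · exact Metric.mem_closedBall_self dist_nonneg
      exact Metric.mem_closedBall.mp (hsub hxseg)
    -- x is far from w
    have hFyw : d ≤ dist w (F y) := by
      rw [← hFz]
      exact hdle z hzL y hyM (by rwa [Metric.mem_sphere] at hysph)
    have hβyFy : dist (F y) (β j y) < d / 3 := hj y hyM
    have hxfar : 2 * d / 3 < dist x w := by
      have h1 : dist w (F y) ≤ dist w x + dist x (F y) := dist_triangle _ _ _
      have h2 : dist x (F y) < d / 3 := by rw [← hyx, dist_comm]; exact hβyFy
      have h3 : dist w x = dist x w := dist_comm _ _
      linarith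
    linarith
  obtain ⟨y, hyball, hyw⟩ := hwin
  have hαw : α j w = y := by rw [← hyw, hrι y]
  rw [dist_comm]
  calc dist (α j w) (F' w) = dist y z := by rw [hαw, hzdef]
    _ ≤ r := Metric.mem_closedBall.mp hyball
    _ < ε := hrε
end
end

section
/- Let N ≥ 1, let D ⊆ ℂ^N be a bounded convex domain, and let (φ_{s,t})_{0≤s≤t} be an evolution family of order d ∈ [1,∞] on D. Then for all 0 ≤ s ≤ t the map φ_{s,t} : D → D is injective. -/
open MeasureTheory Set Metric Filter
open scoped ENNReal

noncomputable section

variable {N : ℕ}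

/-- The maps of an evolution family on a bounded convex domain are injective. -/
theorem evolution_family_injective
    (N : ℕ) (hN : 1 ≤ N) (D : Set (ℂN N)) (hD : IsDomainSet D)
    (hDbdd : Bornology.IsBounded D) (hDconv : Convex ℝ D)
    (d : ℝ≥0∞) (hd : 1 ≤ d) (φ : ℝ → ℝ → ℂN N → ℂN N)
    (hφ : IsEvolutionFamily φ D d) :
    ∀ s t : ℝ, 0 ≤ s → s ≤ t → InjOn (φ s t) D := by
  intro s t hs hst z hz w hw heq
  by_contra hne
  rcases eq_or_lt_of_le hst with rfl | hlt
  · exact hne (((hφ.id_eq s hs z hz).symm.trans heq).trans (hφ.id_eq s hs w hw))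
  have ht : 0 < t := lt_of_le_of_lt hs hlt
  set a : ℝ → ℂN N := fun u => φ s u z with ha
  set b : ℝ → ℂN N := fun u => φ s u w with hb
  set A : Set ℝ := {u | u ∈ Icc s t ∧ a u = b u} with hA
  have htA : t ∈ A := ⟨⟨hst, le_rfl⟩, heq⟩
  have hAne : A.Nonempty := ⟨t, htA⟩
  have hAbdd : BddBelow A := ⟨s, fun u hu => hu.1.1⟩
  set u₀ := sInf A with hu₀def
  have hsu₀ : s ≤ u₀ := le_csInf hAne fun u hu => hu.1.1
  have hu₀t : u₀ ≤ t := csInf_le hAbdd htA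
  have hu₀0 : 0 ≤ u₀ := hs.trans hsu₀
  set p := φ s u₀ z with hpdef
  have hp : p ∈ D := hφ.mapsTo s u₀ hs hsu₀ hz
  -- choose a radius r with closedBall p (2r) ⊆ D
  obtain ⟨r', hr', hball⟩ := Metric.isOpen_iff.1 hD.1 p hp
  set r := r' / 3 with hrdef
  have hr : 0 < r := by positivity
  have hball2 : closedBall p (2 * r) ⊆ D := fun x hx => by
    apply hball
    have : dist x p ≤ 2 * r := mem_closedBall.1 hx
    exact mem_ball.2 (lt_of_le_of_lt this (by rw [hrdef]; linarith))
  -- the compact set K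
  set K : Set (ℂN N) := insert z (insert w (closedBall p (2 * r))) with hK
  have hKD : K ⊆ D := by
    intro x hx
    rcases hx with rfl | hx
    · exact hz
    rcases hx with rfl | hx
    · exact hw
    · exact hball2 hx
  have hKc : IsCompact K :=
    ((isCompact_closedBall p (2 * r)).insert w).insert z
  have hzK : z ∈ K := mem_insert _ _
  have hwK : w ∈ K := mem_insert_of_mem _ (mem_insert _ _)
  obtain ⟨c, hc0, hcLp, hcbound⟩ := hφ.lp_bound t ht K hKD hKc
  have hcint : IntegrableOn c (Icc 0 t) volume := hcLp.integrable hd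
  set C : ℝ → ℝ := fun x => ∫ ξ in (0:ℝ)..x, c ξ with hCdef
  have hCcont : ContinuousOn C (Icc 0 t) := by
    have h1 : IntegrableOn c (uIcc 0 t) volume := by rwa [uIcc_of_le ht.le]
    have := intervalIntegral.continuousOn_primitive_interval (μ := volume) h1
    rwa [uIcc_of_le ht.le] at this
  have hCsub : ∀ u v : ℝ, 0 ≤ u → u ≤ v → v ≤ t →
      (∫ ξ in u..v, c ξ) = C v - C u := by
    intro u v hu huv hvt
    have hiu : IntervalIntegrable c volume 0 u :=
      (hcint.mono_set (by rw [uIcc_of_le hu]; exact Icc_subset_Icc le_rfl (huv.trans hvt))).intervalIntegrable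
    have hiv : IntervalIntegrable c volume 0 v :=
      (hcint.mono_set (by rw [uIcc_of_le (hu.trans huv)]; exact Icc_subset_Icc le_rfl hvt)).intervalIntegrable
    rw [hCdef]
    exact (intervalIntegral.integral_interval_sub_left hiv hiu).symm
  have hCmono : ∀ u v : ℝ, 0 ≤ u → u ≤ v → v ≤ t → C u ≤ C v := by
    intro u v hu huv hvt
    have h0 : (0:ℝ) ≤ ∫ ξ in u..v, c ξ :=
      intervalIntegral.integral_nonneg huv fun x _ => hc0 x
    have := hCsub u v hu huv hvt
    linarith
  -- u₀ belongs to A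
  have hau₀ : a u₀ = b u₀ := by
    by_contra h'
    have hpos : 0 < ‖a u₀ - b u₀‖ := by
      rw [norm_pos_iff, sub_ne_zero]; exact h'
    set ε := ‖a u₀ - b u₀‖ with hεdef
    have hcw : ContinuousWithinAt C (Icc 0 t) u₀ := hCcont u₀ ⟨hu₀0, hu₀t⟩
    rw [Metric.continuousWithinAt_iff] at hcw
    obtain ⟨δ, hδ, hδ'⟩ := hcw (ε / 4) (by positivity)
    obtain ⟨v, hvA, hv⟩ := (csInf_lt_iff hAbdd hAne).1
      (show sInf A < u₀ + δ by rw [← hu₀def]; linarith)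
    have hu₀v : u₀ ≤ v := csInf_le hAbdd hvA
    have hvt : v ≤ t := hvA.1.2
    have hCv : |C v - C u₀| < ε / 4 := by
      have := hδ' ⟨hs.trans hvA.1.1, hvt⟩ (by
        rw [Real.dist_eq, abs_of_nonneg (by linarith)]; linarith)
      rwa [Real.dist_eq] at this
    have hint : (∫ ξ in u₀..v, c ξ) = C v - C u₀ := hCsub u₀ v hu₀0 hu₀v hvt
    have hbz : ‖a v - a u₀‖ ≤ C v - C u₀ := by
      have := hcbound z hzK s u₀ v hs hsu₀ hu₀v hvt
      rwa [hint] at this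
    have hbw : ‖b v - b u₀‖ ≤ C v - C u₀ := by
      have := hcbound w hwK s u₀ v hs hsu₀ hu₀v hvt
      rwa [hint] at this
    have : ε ≤ ‖a v - a u₀‖ + ‖b v - b u₀‖ := by
      have h1 : a u₀ - b u₀ = (a v - b v) - (a v - a u₀) + (b v - b u₀) := by abel
      calc ε = ‖a u₀ - b u₀‖ := rfl
        _ = ‖(a v - b v) - (a v - a u₀) + (b v - b u₀)‖ := by rw [h1]
        _ = ‖-(a v - a u₀) + (b v - b u₀)‖ := by
              have h2 : a v - b v = 0 := sub_eq_zero.2 hvA.2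
              rw [h2, zero_sub]
        _ ≤ ‖-(a v - a u₀)‖ + ‖b v - b u₀‖ := norm_add_le _ _
        _ = ‖a v - a u₀‖ + ‖b v - b u₀‖ := by rw [norm_neg]
    have habs : C v - C u₀ ≤ |C v - C u₀| := le_abs_self _
    linarith
  -- if u₀ = s we get z = w, contradiction
  rcases eq_or_lt_of_le hsu₀ with hequ | hsltu₀
  · apply hne
    have h1 : a s = b s := by rw [hequ]; exact hau₀
    have h2 : a s = z := hφ.id_eq s hs z hz
    have h3 : b s = w := hφ.id_eq s hs w hw
    rw [← h2, ← h3, h1]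
  -- choose u ∈ [s, u₀) with C u₀ - C u < r/8
  have hcw : ContinuousWithinAt C (Icc 0 t) u₀ := hCcont u₀ ⟨hu₀0, hu₀t⟩
  rw [Metric.continuousWithinAt_iff] at hcw
  obtain ⟨δ, hδ, hδ'⟩ := hcw (r / 8) (by positivity)
  set u := max s (u₀ - δ / 2) with hudef
  have hsu : s ≤ u := le_max_left _ _
  have huu₀ : u < u₀ := by
    rw [hudef]; exact max_lt hsltu₀ (by linarith)
  have hu0 : 0 ≤ u := hs.trans hsu
  have hut : u ≤ t := huu₀.le.trans hu₀t
  have hdistu : dist u u₀ < δ := by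
    rw [Real.dist_eq, abs_of_nonpos (by linarith)]
    have : u₀ - δ / 2 ≤ u := le_max_right _ _
    linarith
  have hCless : C u₀ - C u < r / 8 := by
    have := hδ' ⟨hu0, hut⟩ hdistu
    rw [Real.dist_eq] at this
    have h2 : C u ≤ C u₀ := hCmono u u₀ hu0 huu₀.le hu₀t
    have := abs_lt.1 this
    linarith
  set ε := C u₀ - C u with hεdef
  have hε0 : 0 ≤ ε := by
    have := hCmono u u₀ hu0 huu₀.le hu₀t; linarith
  have hint : (∫ ξ in u..u₀, c ξ) = ε := hCsub u u₀ hu0 huu₀.le hu₀t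
  set x := a u with hx
  set y := b u with hy
  have hxy : x ≠ y := by
    intro hcon
    have : u ∈ A := ⟨⟨hsu, hut⟩, hcon⟩
    exact absurd (csInf_le hAbdd this) (not_le.2 huu₀)
  -- bounds: x, y are ε-close to p
  have hxp : ‖x - p‖ ≤ ε := by
    have := hcbound z hzK s u u₀ hs hsu huu₀.le hu₀t
    rw [hint] at this
    rwa [← norm_neg, neg_sub]
  have hbu₀ : φ s u₀ w = p := by rw [hpdef]; exact hau₀.symm
  have hyp : ‖y - p‖ ≤ ε := by
    have := hcbound w hwK s u u₀ hs hsu huu₀.le hu₀t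
    rw [hint, hbu₀] at this
    rwa [← norm_neg, neg_sub]
  -- φ u u₀ is ε-close to the identity on closedBall p (2r)
  have hclose : ∀ q ∈ closedBall p (2 * r), ‖φ u u₀ q - q‖ ≤ ε := by
    intro q hq
    have hqK : q ∈ K := mem_insert_of_mem _ (mem_insert_of_mem _ hq)
    have := hcbound q hqK u u u₀ hu0 le_rfl huu₀.le hu₀t
    rw [hint, hφ.id_eq u hu0 q (hball2 hq)] at this
    exact this
  have hcompx : φ u u₀ x = p := by
    rw [hx, ha, hpdef]; exact (hφ.comp s u u₀ hs hsu huu₀.le z hz).symm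
  have hcompy : φ u u₀ y = p := by
    rw [hy, hb, ← hbu₀]; exact (hφ.comp s u u₀ hs hsu huu₀.le w hw).symm
  -- Schwarz lemma setup
  set v := y - x with hv
  have hv0 : 0 < ‖v‖ := by
    rw [norm_pos_iff, hv, sub_ne_zero]; exact fun h => hxy h.symm
  have hv2ε : ‖v‖ ≤ 2 * ε := by
    have : v = (y - p) - (x - p) := by rw [hv]; abel
    rw [this]
    calc ‖(y - p) - (x - p)‖ ≤ ‖y - p‖ + ‖x - p‖ := norm_sub_le _ _
      _ ≤ 2 * ε := by linarith
  have hεr : ε < r / 8 := hCless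
  set g : ℂN N → ℂN N := fun q => φ u u₀ q - q with hg
  set F : ℂ → ℂN N := fun ζ => g (x + ζ • v) with hF
  set R₁ : ℝ := r / ‖v‖ with hR₁
  have hR₁pos : 0 < R₁ := by positivity
  have hmapsL : ∀ ζ : ℂ, ζ ∈ ball (0:ℂ) R₁ → x + ζ • v ∈ ball p (2 * r) := by
    intro ζ hζ
    rw [mem_ball, dist_eq_norm]
    have hζn : ‖ζ‖ < R₁ := by rwa [mem_ball, dist_zero_right] at hζ
    calc ‖x + ζ • v - p‖ = ‖(x - p) + ζ • v‖ := by rw [add_sub_right_comm]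
      _ ≤ ‖x - p‖ + ‖ζ • v‖ := norm_add_le _ _
      _ = ‖x - p‖ + ‖ζ‖ * ‖v‖ := by rw [norm_smul]
      _ < ε + R₁ * ‖v‖ := by
          have : ‖ζ‖ * ‖v‖ < R₁ * ‖v‖ := by
            exact mul_lt_mul_of_pos_right hζn hv0
          linarith
      _ = ε + r := by rw [hR₁]; field_simp
      _ < 2 * r := by linarith
  have hgdiff : DifferentiableOn ℂ g (ball p (2 * r)) := by
    apply DifferentiableOn.sub
    · exact (hφ.holomorphic u u₀ hu0 huu₀.le).mono
        (fun q hq => hball2 (ball_subset_closedBall hq))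
    · exact differentiableOn_id
  have hFdiff : DifferentiableOn ℂ F (ball 0 R₁) := by
    apply hgdiff.comp
    · intro ζ _
      apply DifferentiableAt.differentiableWithinAt
      exact (differentiableAt_const x).add ((differentiableAt_id).smul_const v)
    · intro ζ hζ
      exact hmapsL ζ hζ
  have hFbound : ∀ ζ : ℂ, ζ ∈ ball (0:ℂ) R₁ → ‖F ζ‖ ≤ ε := by
    intro ζ hζ
    exact hclose _ (ball_subset_closedBall (hmapsL ζ hζ))
  have hFmaps : MapsTo F (ball (0:ℂ) R₁) (ball (F 0) (r / 2)) := by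
    intro ζ hζ
    rw [mem_ball, dist_eq_norm]
    have h00 : (0:ℂ) ∈ ball (0:ℂ) R₁ := mem_ball_self hR₁pos
    calc ‖F ζ - F 0‖ ≤ ‖F ζ‖ + ‖F 0‖ := norm_sub_le _ _
      _ ≤ ε + ε := add_le_add (hFbound ζ hζ) (hFbound 0 h00)
      _ < r / 2 := by linarith
  have h1mem : (1:ℂ) ∈ ball (0:ℂ) R₁ := by
    rw [mem_ball, dist_zero_right, norm_one, hR₁]
    rw [lt_div_iff₀ hv0, one_mul]
    linarith
  have hschwarz := Complex.dist_le_div_mul_dist_of_mapsTo_ball hFdiff (hFmaps.mono_right ball_subset_closedBall) h1mem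
  have hdist10 : dist (1:ℂ) (0:ℂ) = 1 := by
    rw [dist_zero_right, norm_one]
  rw [hdist10, mul_one] at hschwarz
  have hF1 : F 1 = p - y := by
    have : x + (1:ℂ) • v = y := by rw [one_smul, hv]; abel
    rw [hF]; simp only [this, hg, hcompy]
  have hF0 : F 0 = p - x := by
    have : x + (0:ℂ) • v = x := by rw [zero_smul, add_zero]
    rw [hF]; simp only [this, hg, hcompx]
  have hdistF : dist (F 1) (F 0) = ‖v‖ := by
    rw [hF1, hF0, dist_eq_norm]
    have : p - y - (p - x) = -v := by rw [hv]; abel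
    rw [this, norm_neg]
  rw [hdistF] at hschwarz
  have hcalc : r / 2 / R₁ = ‖v‖ / 2 := by
    rw [hR₁]; field_simp
  rw [hcalc] at hschwarz
  linarith
end
end
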